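/- Let F be the Minkowskian product of Finsler metrics F₁ and F₂ with respect to a product function f. Then at every point (x,y) = ((x₁,x₂),(y₁,y₂)) with y₁ ≠ 0 and y₂ ≠ 0, the Berwald curvature B^α_{βγη} = ∂³𝔾^α/∂y^β∂y^γ∂y^η of F satisfies: B^i_{jlh}(x,y) = B₁^i_{jlh}(x₁,y₁) and B^{i'}_{j'l'h'}(x,y) = B₂^{i'}_{j'l'h'}(x₂,y₂) on the pure blocks, and every component with mixed block indices vanishes (in particular B^i_{βγη} = 0 whenever at least one of β,γ,η lies in the second block, and B^{i'}_{βγη} = 0 whenever at least one of β,γ,η lies in the first block). -/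

import Mathlib

open Matrix

/-- Partial derivative in the fiber variable `y` in the direction of the `α`-th
coordinate, for a function `g (x, y)` of a base point and a fiber vector. -/
noncomputable def pdy {ι : Type*} [Fintype ι] [DecidableEq ι]
    (g : (ι → ℝ) → (ι → ℝ) → ℝ) (α : ι) : (ι → ℝ) → (ι → ℝ) → ℝ :=
  fun x y => fderiv ℝ (g x) y (Pi.single α 1)

/-- Partial derivative in the base variable `x` in the direction of the `γ`-th
coordinate, for a function `g (x, y)` of a base point and a fiber vector. -/
noncomputable def pdx {ι : Type*} [Fintype ι] [DecidableEq ι]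
    (g : (ι → ℝ) → (ι → ℝ) → ℝ) (γ : ι) : (ι → ℝ) → (ι → ℝ) → ℝ :=
  fun x y => fderiv ℝ (fun x' => g x' y) x (Pi.single γ 1)

/-- The fundamental tensor `(G_{αβ}) = (∂²(F²)/∂y^α∂y^β)` of a Finsler metric `F`. -/
noncomputable def fundTensor {ι : Type*} [Fintype ι] [DecidableEq ι]
    (F : (ι → ℝ) → (ι → ℝ) → ℝ) (x y : ι → ℝ) : Matrix ι ι ℝ :=
  fun α β => pdy (pdy (fun x' y' => (F x' y') ^ 2) β) α x y

/-- `F` is a Finsler metric on the open set `U`: `G = F²` is smooth on the slit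
domain, `F` is positive for `y ≠ 0`, absolutely 1-homogeneous in `y`, and its
fundamental tensor is positive definite for `y ≠ 0`. -/
structure IsFinslerMetric {ι : Type*} [Fintype ι] [DecidableEq ι]
    (U : Set (ι → ℝ)) (F : (ι → ℝ) → (ι → ℝ) → ℝ) : Prop where
  isOpen : IsOpen U
  smooth : ContDiffOn ℝ (⊤ : ℕ∞) (fun p : (ι → ℝ) × (ι → ℝ) => (F p.1 p.2) ^ 2)
    (U ×ˢ {y | y ≠ 0})
  pos : ∀ x ∈ U, ∀ y : ι → ℝ, y ≠ 0 → 0 < F x y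
  homog : ∀ x ∈ U, ∀ (y : ι → ℝ) (c : ℝ), F x (c • y) = |c| * F x y
  posDef : ∀ x ∈ U, ∀ y : ι → ℝ, y ≠ 0 → (fundTensor F x y).PosDef

/-- The geodesic spray coefficients
`𝔾^α = ½ G^{αβ}(∂²G/∂y^β∂x^γ · y^γ − ∂G/∂x^β)` of a Finsler metric `F`. -/
noncomputable def spray {ι : Type*} [Fintype ι] [DecidableEq ι]
    (F : (ι → ℝ) → (ι → ℝ) → ℝ) (α : ι) : (ι → ℝ) → (ι → ℝ) → ℝ :=
  fun x y => (1 / 2) * ∑ β, (fundTensor F x y)⁻¹ α β *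
    ((∑ γ, pdx (pdy (fun x' y' => (F x' y') ^ 2) β) γ x y * y γ) -
      pdx (fun x' y' => (F x' y') ^ 2) β x y)

/-- The Cartan nonlinear connection coefficients `Γ^α_β = ∂𝔾^α/∂y^β`. -/
noncomputable def nonlinConn {ι : Type*} [Fintype ι] [DecidableEq ι]
    (F : (ι → ℝ) → (ι → ℝ) → ℝ) (α β : ι) : (ι → ℝ) → (ι → ℝ) → ℝ :=
  pdy (spray F α) β

/-- The Berwald connection coefficients `Γ̌^α_{β;γ} = ∂Γ^α_γ/∂y^β = ∂²𝔾^α/∂y^β∂y^γ`. -/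
noncomputable def berwaldConn {ι : Type*} [Fintype ι] [DecidableEq ι]
    (F : (ι → ℝ) → (ι → ℝ) → ℝ) (α β γ : ι) : (ι → ℝ) → (ι → ℝ) → ℝ :=
  pdy (nonlinConn F α γ) β

/-- The Berwald curvature `B^α_{βγη} = ∂³𝔾^α/∂y^β∂y^γ∂y^η`. -/
noncomputable def berwaldCurv {ι : Type*} [Fintype ι] [DecidableEq ι]
    (F : (ι → ℝ) → (ι → ℝ) → ℝ) (α β γ η : ι) : (ι → ℝ) → (ι → ℝ) → ℝ :=
  pdy (pdy (pdy (spray F α) η) γ) β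

/-- The mean Berwald curvature `E_{βγ} = ½ B^α_{βγα}` (sum over `α`). -/
noncomputable def meanBerwaldCurv {ι : Type*} [Fintype ι] [DecidableEq ι]
    (F : (ι → ℝ) → (ι → ℝ) → ℝ) (β γ : ι) : (ι → ℝ) → (ι → ℝ) → ℝ :=
  fun x y => (1 / 2) * ∑ α, berwaldCurv F α β γ α x y

/-- The Landsberg curvature `L_{βγη} = −¼ y^ν G_{να} B^α_{βγη}` (sums over `ν, α`). -/
noncomputable def landsbergCurv {ι : Type*} [Fintype ι] [DecidableEq ι]
    (F : (ι → ℝ) → (ι → ℝ) → ℝ) (β γ η : ι) : (ι → ℝ) → (ι → ℝ) → ℝ :=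
  fun x y => -(1 / 4) * ∑ ν, ∑ α, y ν * fundTensor F x y ν α * berwaldCurv F α β γ η x y

/-- The mean Landsberg curvature `J_α = 2 G^{βγ} L_{αβγ}` (sums over `β, γ`). -/
noncomputable def meanLandsbergCurv {ι : Type*} [Fintype ι] [DecidableEq ι]
    (F : (ι → ℝ) → (ι → ℝ) → ℝ) (α : ι) : (ι → ℝ) → (ι → ℝ) → ℝ :=
  fun x y => 2 * ∑ β, ∑ γ, (fundTensor F x y)⁻¹ β γ * landsbergCurv F α β γ x y

/-- Partial derivative of `f : ℝ → ℝ → ℝ` with respect to the first variable. -/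
noncomputable def pderivS (f : ℝ → ℝ → ℝ) (s t : ℝ) : ℝ := deriv (fun u => f u t) s

/-- Partial derivative of `f : ℝ → ℝ → ℝ` with respect to the second variable. -/
noncomputable def pderivT (f : ℝ → ℝ → ℝ) (s t : ℝ) : ℝ := deriv (fun v => f s v) t

/-- `f_st = ∂²f/∂s∂t`. -/
noncomputable def pderivST (f : ℝ → ℝ → ℝ) (s t : ℝ) : ℝ :=
  deriv (fun u => pderivT f u t) s

/-- The data of a Minkowskian product: `F₁, F₂` are Finsler metrics on `U₁, U₂`,
`f` is an admissible product function, and `F = √(f(F₁², F₂²))` is the Minkowskian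
product metric, itself assumed to be a Finsler metric on `U₁ × U₂`. -/
structure IsMinkowskianProduct {m n : ℕ}
    (U₁ : Set (Fin m → ℝ)) (U₂ : Set (Fin n → ℝ))
    (F₁ : (Fin m → ℝ) → (Fin m → ℝ) → ℝ) (F₂ : (Fin n → ℝ) → (Fin n → ℝ) → ℝ)
    (f : ℝ → ℝ → ℝ)
    (F : (Fin m ⊕ Fin n → ℝ) → (Fin m ⊕ Fin n → ℝ) → ℝ) : Prop where
  finsler₁ : IsFinslerMetric U₁ F₁
  finsler₂ : IsFinslerMetric U₂ F₂
  f_cont : ContinuousOn (fun p : ℝ × ℝ => f p.1 p.2) (Set.Ici 0 ×ˢ Set.Ici 0)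
  f_nonneg : ∀ s ∈ Set.Ici (0 : ℝ), ∀ t ∈ Set.Ici (0 : ℝ), 0 ≤ f s t
  f_zero_iff : ∀ s ∈ Set.Ici (0 : ℝ), ∀ t ∈ Set.Ici (0 : ℝ),
    (f s t = 0 ↔ s = 0 ∧ t = 0)
  f_homog : ∀ c ∈ Set.Ici (0 : ℝ), ∀ s ∈ Set.Ici (0 : ℝ), ∀ t ∈ Set.Ici (0 : ℝ),
    f (c * s) (c * t) = c * f s t
  f_smooth : ContDiffOn ℝ (⊤ : ℕ∞) (fun p : ℝ × ℝ => f p.1 p.2)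
    (Set.Ioi 0 ×ˢ Set.Ioi 0)
  fs_ne : ∀ s > (0 : ℝ), ∀ t > (0 : ℝ), pderivS f s t ≠ 0
  ft_ne : ∀ s > (0 : ℝ), ∀ t > (0 : ℝ), pderivT f s t ≠ 0
  delta_ne : ∀ s > (0 : ℝ), ∀ t > (0 : ℝ),
    pderivS f s t * pderivT f s t - 2 * f s t * pderivST f s t ≠ 0
  F_def : ∀ (x y : Fin m ⊕ Fin n → ℝ),
    F x y = Real.sqrt (f ((F₁ (x ∘ Sum.inl) (y ∘ Sum.inl)) ^ 2)
      ((F₂ (x ∘ Sum.inr) (y ∘ Sum.inr)) ^ 2))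
  finsler : IsFinslerMetric
    {x : Fin m ⊕ Fin n → ℝ | (x ∘ Sum.inl) ∈ U₁ ∧ (x ∘ Sum.inr) ∈ U₂} F

set_option linter.unusedSectionVars false
set_option maxHeartbeats 1000000

namespace MinkProof

variable {ι : Type*} [Fintype ι] [DecidableEq ι]

abbrev E (ι : Type*) := ι → ℝ


/-- slice in y has derivative -/
lemma hasFDerivAt_sliceY {g : E ι → E ι → ℝ} {x y : E ι}
    (h : DifferentiableAt ℝ (Function.uncurry g) (x, y)) :
    HasFDerivAt (g x)
      ((fderiv ℝ (Function.uncurry g) (x, y)).comp (ContinuousLinearMap.inr ℝ (E ι) (E ι))) y := by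
  have h1 : HasFDerivAt (Function.uncurry g) (fderiv ℝ (Function.uncurry g) (x, y)) (x, y) :=
    h.hasFDerivAt
  have h2 := hasFDerivAt_prodMk_right (𝕜 := ℝ) x y
  exact h1.comp y h2

lemma hasFDerivAt_sliceX {g : E ι → E ι → ℝ} {x y : E ι}
    (h : DifferentiableAt ℝ (Function.uncurry g) (x, y)) :
    HasFDerivAt (fun x' => g x' y)
      ((fderiv ℝ (Function.uncurry g) (x, y)).comp (ContinuousLinearMap.inl ℝ (E ι) (E ι))) x := by
  have h1 : HasFDerivAt (Function.uncurry g) (fderiv ℝ (Function.uncurry g) (x, y)) (x, y) :=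
    h.hasFDerivAt
  have h2 := hasFDerivAt_prodMk_left (𝕜 := ℝ) x y
  exact h1.comp x h2

lemma pdy_eq {g : E ι → E ι → ℝ} {x y : E ι}
    (h : DifferentiableAt ℝ (Function.uncurry g) (x, y)) (α : ι) :
    pdy g α x y = fderiv ℝ (Function.uncurry g) (x, y) (0, Pi.single α 1) := by
  have := (hasFDerivAt_sliceY h).fderiv
  simp only [pdy, this]
  rfl

lemma pdx_eq {g : E ι → E ι → ℝ} {x y : E ι}
    (h : DifferentiableAt ℝ (Function.uncurry g) (x, y)) (γ : ι) :
    pdx g γ x y = fderiv ℝ (Function.uncurry g) (x, y) (Pi.single γ 1, 0) := by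
  have := (hasFDerivAt_sliceX h).fderiv
  simp only [pdx, this]
  rfl

variable {s : Set (E ι × E ι)}

lemma diffAt_of_contDiffOn {g : E ι → E ι → ℝ} (hs : IsOpen s)
    (hg : ContDiffOn ℝ (⊤ : ℕ∞) (Function.uncurry g) s) {p : E ι × E ι} (hp : p ∈ s) :
    DifferentiableAt ℝ (Function.uncurry g) p :=
  (hg.differentiableOn (by simp)).differentiableAt (hs.mem_nhds hp)

lemma contDiffOn_pdy {g : E ι → E ι → ℝ} (hs : IsOpen s)
    (hg : ContDiffOn ℝ (⊤ : ℕ∞) (Function.uncurry g) s) (α : ι) :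
    ContDiffOn ℝ (⊤ : ℕ∞) (Function.uncurry (pdy g α)) s := by
  have hf : ContDiffOn ℝ (⊤ : ℕ∞) (fderiv ℝ (Function.uncurry g)) s :=
    hg.fderiv_of_isOpen hs (by exact_mod_cast le_top)
  have h2 : ContDiffOn ℝ (⊤ : ℕ∞)
      (fun p => fderiv ℝ (Function.uncurry g) p (0, Pi.single α 1)) s :=
    hf.clm_apply contDiffOn_const
  refine h2.congr fun p hp => ?_
  have := pdy_eq (diffAt_of_contDiffOn hs hg hp) α
  simpa [Function.uncurry] using this

lemma contDiffOn_pdx {g : E ι → E ι → ℝ} (hs : IsOpen s)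
    (hg : ContDiffOn ℝ (⊤ : ℕ∞) (Function.uncurry g) s) (γ : ι) :
    ContDiffOn ℝ (⊤ : ℕ∞) (Function.uncurry (pdx g γ)) s := by
  have hf : ContDiffOn ℝ (⊤ : ℕ∞) (fderiv ℝ (Function.uncurry g)) s :=
    hg.fderiv_of_isOpen hs (by exact_mod_cast le_top)
  have h2 : ContDiffOn ℝ (⊤ : ℕ∞)
      (fun p => fderiv ℝ (Function.uncurry g) p (Pi.single γ 1, 0)) s :=
    hf.clm_apply contDiffOn_const
  refine h2.congr fun p hp => ?_
  have := pdx_eq (diffAt_of_contDiffOn hs hg hp) γ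
  simpa [Function.uncurry] using this



lemma pderivS_eq {f : ℝ → ℝ → ℝ} {s t : ℝ}
    (h : DifferentiableAt ℝ (Function.uncurry f) (s, t)) :
    pderivS f s t = fderiv ℝ (Function.uncurry f) (s, t) (1, 0) := by
  have h2 : HasDerivAt (fun u : ℝ => (u, t)) ((1 : ℝ), (0 : ℝ)) s :=
    (hasDerivAt_id s).prodMk (hasDerivAt_const s t)
  have h3 : HasDerivAt (fun u => f u t)
      (fderiv ℝ (Function.uncurry f) (s, t) (1, 0)) s :=
    by have := h.hasFDerivAt.comp_hasDerivAt s h2; exact this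
  exact h3.deriv

lemma pderivT_eq {f : ℝ → ℝ → ℝ} {s t : ℝ}
    (h : DifferentiableAt ℝ (Function.uncurry f) (s, t)) :
    pderivT f s t = fderiv ℝ (Function.uncurry f) (s, t) (0, 1) := by
  have h2 : HasDerivAt (fun v : ℝ => (s, v)) ((0 : ℝ), (1 : ℝ)) t :=
    (hasDerivAt_const t s).prodMk (hasDerivAt_id t)
  have h3 : HasDerivAt (fun v => f s v)
      (fderiv ℝ (Function.uncurry f) (s, t) (0, 1)) t :=
    (h.hasFDerivAt.comp_hasDerivAt t h2)
  exact h3.deriv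

lemma fderiv_uncurry_apply {f : ℝ → ℝ → ℝ} {s t : ℝ}
    (h : DifferentiableAt ℝ (Function.uncurry f) (s, t)) (a b : ℝ) :
    fderiv ℝ (Function.uncurry f) (s, t) (a, b) =
      a * pderivS f s t + b * pderivT f s t := by
  have : ((a, b) : ℝ × ℝ) = a • ((1 : ℝ), (0 : ℝ)) + b • ((0 : ℝ), (1 : ℝ)) := by
    simp [Prod.ext_iff]
  rw [this, map_add, _root_.map_smul, _root_.map_smul, pderivS_eq h, pderivT_eq h]
  simp [smul_eq_mul]

/-- smoothness of pderivS, pderivT on an open set where f is smooth -/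
lemma contDiffOn_pderivS {f : ℝ → ℝ → ℝ} {sf : Set (ℝ × ℝ)} (hs : IsOpen sf)
    (hf : ContDiffOn ℝ (⊤ : ℕ∞) (Function.uncurry f) sf) :
    ContDiffOn ℝ (⊤ : ℕ∞) (Function.uncurry (pderivS f)) sf := by
  have hD : ContDiffOn ℝ (⊤ : ℕ∞) (fderiv ℝ (Function.uncurry f)) sf :=
    hf.fderiv_of_isOpen hs (by exact_mod_cast le_top)
  have h2 : ContDiffOn ℝ (⊤ : ℕ∞)
      (fun p => fderiv ℝ (Function.uncurry f) p ((1 : ℝ), (0 : ℝ))) sf :=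
    hD.clm_apply contDiffOn_const
  refine h2.congr fun p hp => ?_
  have hd : DifferentiableAt ℝ (Function.uncurry f) p :=
    (hf.differentiableOn (by simp)).differentiableAt (hs.mem_nhds hp)
  have := pderivS_eq (f := f) (s := p.1) (t := p.2) (by simpa using hd)
  simpa [Function.uncurry] using this

lemma contDiffOn_pderivT {f : ℝ → ℝ → ℝ} {sf : Set (ℝ × ℝ)} (hs : IsOpen sf)
    (hf : ContDiffOn ℝ (⊤ : ℕ∞) (Function.uncurry f) sf) :
    ContDiffOn ℝ (⊤ : ℕ∞) (Function.uncurry (pderivT f)) sf := by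
  have hD : ContDiffOn ℝ (⊤ : ℕ∞) (fderiv ℝ (Function.uncurry f)) sf :=
    hf.fderiv_of_isOpen hs (by exact_mod_cast le_top)
  have h2 : ContDiffOn ℝ (⊤ : ℕ∞)
      (fun p => fderiv ℝ (Function.uncurry f) p ((0 : ℝ), (1 : ℝ))) sf :=
    hD.clm_apply contDiffOn_const
  refine h2.congr fun p hp => ?_
  have hd : DifferentiableAt ℝ (Function.uncurry f) p :=
    (hf.differentiableOn (by simp)).differentiableAt (hs.mem_nhds hp)
  have := pderivT_eq (f := f) (s := p.1) (t := p.2) (by simpa using hd)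
  simpa [Function.uncurry] using this

/-- Schwarz for f on an open set -/
lemma schwarz {f : ℝ → ℝ → ℝ} {sf : Set (ℝ × ℝ)} (hs : IsOpen sf)
    (hf : ContDiffOn ℝ (⊤ : ℕ∞) (Function.uncurry f) sf) {s t : ℝ} (hp : (s, t) ∈ sf) :
    pderivT (pderivS f) s t = pderivS (pderivT f) s t := by
  set F := Function.uncurry f
  have hdiff : DifferentiableOn ℝ F sf := hf.differentiableOn (by simp)
  have hev : ∀ᶠ p in nhds ((s, t) : ℝ × ℝ), HasFDerivAt F (fderiv ℝ F p) p := by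
    filter_upwards [hs.mem_nhds hp] with p hps
    exact (hdiff.differentiableAt (hs.mem_nhds hps)).hasFDerivAt
  have hD : ContDiffOn ℝ (⊤ : ℕ∞) (fderiv ℝ F) sf :=
    hf.fderiv_of_isOpen hs (by exact_mod_cast le_top)
  have hD1 : DifferentiableAt ℝ (fderiv ℝ F) (s, t) :=
    ((hD.differentiableOn (by simp)).differentiableAt (hs.mem_nhds hp))
  have hsecond : HasFDerivAt (fderiv ℝ F) (fderiv ℝ (fderiv ℝ F) (s, t)) (s, t) :=
    hD1.hasFDerivAt
  have hsym := second_derivative_symmetric_of_eventually hev hsecond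
  -- express pderivT (pderivS f) via second derivative
  set F'' := fderiv ℝ (fderiv ℝ F) (s, t)
  have key1 : pderivT (pderivS f) s t = (F'' (0, 1)) (1, 0) := by
    have hSd : DifferentiableAt ℝ (Function.uncurry (pderivS f)) (s, t) :=
      ((contDiffOn_pderivS hs hf).differentiableOn
        (by simp)).differentiableAt (hs.mem_nhds hp)
    rw [pderivT_eq hSd]
    -- uncurry (pderivS f) agrees near (s,t) with p ↦ fderiv F p (1,0)
    have hev2 : (Function.uncurry (pderivS f)) =ᶠ[nhds ((s, t) : ℝ × ℝ)]
        (fun p => fderiv ℝ F p ((1 : ℝ), (0 : ℝ))) := by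
      filter_upwards [hs.mem_nhds hp] with p hps
      have hd : DifferentiableAt ℝ F p := hdiff.differentiableAt (hs.mem_nhds hps)
      have := pderivS_eq (f := f) (s := p.1) (t := p.2) (by simpa using hd)
      simpa [Function.uncurry] using this
    rw [hev2.fderiv_eq]
    have happ : HasFDerivAt (fun p => fderiv ℝ F p ((1 : ℝ), (0 : ℝ)))
        (F''.flip ((1 : ℝ), (0 : ℝ))) (s, t) := by
      have := hsecond.clm_apply (hasFDerivAt_const ((1 : ℝ), (0 : ℝ)) ((s, t) : ℝ × ℝ))
      simpa using this
    rw [happ.fderiv]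
    rfl
  have key2 : pderivS (pderivT f) s t = (F'' (1, 0)) (0, 1) := by
    have hSd : DifferentiableAt ℝ (Function.uncurry (pderivT f)) (s, t) :=
      ((contDiffOn_pderivT hs hf).differentiableOn
        (by simp)).differentiableAt (hs.mem_nhds hp)
    rw [pderivS_eq hSd]
    have hev2 : (Function.uncurry (pderivT f)) =ᶠ[nhds ((s, t) : ℝ × ℝ)]
        (fun p => fderiv ℝ F p ((0 : ℝ), (1 : ℝ))) := by
      filter_upwards [hs.mem_nhds hp] with p hps
      have hd : DifferentiableAt ℝ F p := hdiff.differentiableAt (hs.mem_nhds hps)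
      have := pderivT_eq (f := f) (s := p.1) (t := p.2) (by simpa using hd)
      simpa [Function.uncurry] using this
    rw [hev2.fderiv_eq]
    have happ : HasFDerivAt (fun p => fderiv ℝ F p ((0 : ℝ), (1 : ℝ)))
        (F''.flip ((0 : ℝ), (1 : ℝ))) (s, t) := by
      have := hsecond.clm_apply (hasFDerivAt_const ((0 : ℝ), (1 : ℝ)) ((s, t) : ℝ × ℝ))
      simpa using this
    rw [happ.fderiv]
    rfl
  rw [key1, key2, hsym]



-- congruence
lemma pdy_congr {g₁ g₂ : E ι → E ι → ℝ} {s : Set (E ι × E ι)} (hs : IsOpen s)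
    (h : ∀ x' y', (x', y') ∈ s → g₁ x' y' = g₂ x' y') {x y : E ι} (hp : (x, y) ∈ s) (α : ι) :
    pdy g₁ α x y = pdy g₂ α x y := by
  have hV : IsOpen {y' : E ι | (x, y') ∈ s} := hs.preimage (Continuous.prodMk_right x)
  have hev : g₁ x =ᶠ[nhds y] g₂ x := by
    filter_upwards [hV.mem_nhds hp] with y' hy'
    exact h x y' hy'
  simp only [pdy, hev.fderiv_eq]

lemma pdx_congr {g₁ g₂ : E ι → E ι → ℝ} {s : Set (E ι × E ι)} (hs : IsOpen s)
    (h : ∀ x' y', (x', y') ∈ s → g₁ x' y' = g₂ x' y') {x y : E ι} (hp : (x, y) ∈ s) (γ : ι) :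
    pdx g₁ γ x y = pdx g₂ γ x y := by
  have hV : IsOpen {x' : E ι | (x', y) ∈ s} :=
    hs.preimage (continuous_id.prodMk continuous_const)
  have hev : (fun x' => g₁ x' y) =ᶠ[nhds x] (fun x' => g₂ x' y) := by
    filter_upwards [hV.mem_nhds hp] with x' hx'
    exact h x' y hx'
  simp only [pdx, hev.fderiv_eq]

lemma pi_repr (y : E ι) : y = ∑ l, y l • (Pi.single l 1 : E ι) := by
  funext j
  simp [Pi.single_apply]


section Euler

variable {U : Set (E ι)} {g : E ι → E ι → ℝ}

lemma euler0 (hU : IsOpen U)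
    (hg : ContDiffOn ℝ (⊤ : ℕ∞) (Function.uncurry g) (U ×ˢ {y : E ι | y ≠ 0}))
    (hhom : ∀ x ∈ U, ∀ (y : E ι) (c : ℝ), g x (c • y) = c ^ 2 * g x y)
    {x y : E ι} (hx : x ∈ U) (hy : y ≠ 0) :
    ∑ l, pdy g l x y * y l = 2 * g x y := by
  have hsopen : IsOpen (U ×ˢ {y : E ι | y ≠ 0}) := hU.prod isOpen_ne
  have hjd : DifferentiableAt ℝ (Function.uncurry g) (x, y) :=
    diffAt_of_contDiffOn hsopen hg ⟨hx, hy⟩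
  have hgd : DifferentiableAt ℝ (g x) y := (hasFDerivAt_sliceY hjd).differentiableAt
  set D := fderiv ℝ (g x) y with hD
  have h2 : HasDerivAt (fun c : ℝ => c • y) y 1 := by
    simpa using (hasDerivAt_id (1 : ℝ)).smul_const y
  have hl : HasFDerivAt (g x) D ((fun c : ℝ => c • y) 1) := by
    simpa using hgd.hasFDerivAt
  have h3 : HasDerivAt (fun c : ℝ => g x (c • y)) (D y) 1 := by
    exact hl.comp_hasDerivAt (1 : ℝ) h2
  have h4 : HasDerivAt (fun c : ℝ => g x (c • y)) (2 * g x y) 1 := by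
    have heq : (fun c : ℝ => g x (c • y)) = fun c : ℝ => c ^ 2 * g x y := by
      funext c; exact hhom x hx y c
    rw [heq]
    simpa using (hasDerivAt_pow 2 (1 : ℝ)).mul_const (g x y)
  have hDy : D y = 2 * g x y := h3.unique h4
  calc ∑ l, pdy g l x y * y l = ∑ l, y l * D (Pi.single l 1) := by
        refine Finset.sum_congr rfl fun l _ => ?_
        rw [mul_comm]; rfl
    _ = D y := by
        conv_rhs => rw [pi_repr y]
        rw [map_sum]
        exact Finset.sum_congr rfl fun l _ => by rw [_root_.map_smul]; rfl
    _ = 2 * g x y := hDy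

lemma euler_y (hU : IsOpen U)
    (hg : ContDiffOn ℝ (⊤ : ℕ∞) (Function.uncurry g) (U ×ˢ {y : E ι | y ≠ 0}))
    (hhom : ∀ x ∈ U, ∀ (y : E ι) (c : ℝ), g x (c • y) = c ^ 2 * g x y)
    {x y : E ι} (hx : x ∈ U) (hy : y ≠ 0) (j : ι) :
    ∑ l, pdy (pdy g l) j x y * y l = pdy g j x y := by
  have hsopen : IsOpen (U ×ˢ {y : E ι | y ≠ 0}) := hU.prod isOpen_ne
  have hjd : DifferentiableAt ℝ (Function.uncurry g) (x, y) :=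
    diffAt_of_contDiffOn hsopen hg ⟨hx, hy⟩
  have hgd : DifferentiableAt ℝ (g x) y := (hasFDerivAt_sliceY hjd).differentiableAt
  have hterm : ∀ l : ι, HasFDerivAt (fun y' => pdy g l x y' * y' l)
      (pdy g l x y • (ContinuousLinearMap.proj l : (E ι) →L[ℝ] ℝ) +
        y l • fderiv ℝ (pdy g l x) y) y := by
    intro l
    have h1 : DifferentiableAt ℝ (Function.uncurry (pdy g l)) (x, y) :=
      diffAt_of_contDiffOn hsopen (contDiffOn_pdy hsopen hg l) ⟨hx, hy⟩
    have h2 : HasFDerivAt (pdy g l x) (fderiv ℝ (pdy g l x) y) y :=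
      ((hasFDerivAt_sliceY h1).differentiableAt).hasFDerivAt
    have h3 : HasFDerivAt (fun y' : E ι => y' l)
        (ContinuousLinearMap.proj l : (E ι) →L[ℝ] ℝ) y :=
      hasFDerivAt_apply l y
    exact h2.mul h3
  have hA : HasFDerivAt (fun y' => ∑ l, pdy g l x y' * y' l)
      (∑ l, (pdy g l x y • (ContinuousLinearMap.proj l : (E ι) →L[ℝ] ℝ) +
        y l • fderiv ℝ (pdy g l x) y)) y :=
    HasFDerivAt.fun_sum (fun l _ => hterm l)
  have hB : HasFDerivAt (fun y' => 2 * g x y') ((2 : ℝ) • fderiv ℝ (g x) y) y :=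
    hgd.hasFDerivAt.const_mul 2
  have hev : (fun y' => ∑ l, pdy g l x y' * y' l) =ᶠ[nhds y] (fun y' => 2 * g x y') := by
    filter_upwards [(isOpen_ne : IsOpen {y' : E ι | y' ≠ 0}).mem_nhds hy] with y' hy'
    exact euler0 hU hg hhom hx hy'
  have hA' : HasFDerivAt (fun y' => ∑ l, pdy g l x y' * y' l)
      ((2 : ℝ) • fderiv ℝ (g x) y) y := hB.congr_of_eventuallyEq hev
  have huniq := hA.unique hA'
  have happ := congrArg (fun L => L (Pi.single j 1)) huniq
  simp only [ContinuousLinearMap.sum_apply, ContinuousLinearMap.add_apply,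
    ContinuousLinearMap.smul_apply, ContinuousLinearMap.proj_apply,
    smul_eq_mul] at happ
  have hsingle : ∑ l, pdy g l x y * (Pi.single j 1 : E ι) l = pdy g j x y := by
    simp [Pi.single_apply]
  rw [Finset.sum_add_distrib] at happ
  have h5 : ∑ l, pdy g l x y * (Pi.single j 1 : E ι) l +
      ∑ l, y l * fderiv ℝ (pdy g l x) y (Pi.single j 1) = 2 * pdy g j x y := by
    simpa [pdy] using happ
  rw [hsingle] at h5
  have h6 : ∑ l, y l * fderiv ℝ (pdy g l x) y (Pi.single j 1) = pdy g j x y := by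
    linarith
  calc ∑ l, pdy (pdy g l) j x y * y l
      = ∑ l, y l * fderiv ℝ (pdy g l x) y (Pi.single j 1) := by
        exact Finset.sum_congr rfl fun l _ => by rw [mul_comm]; rfl
    _ = pdy g j x y := h6

lemma euler_x (hU : IsOpen U)
    (hg : ContDiffOn ℝ (⊤ : ℕ∞) (Function.uncurry g) (U ×ˢ {y : E ι | y ≠ 0}))
    (hhom : ∀ x ∈ U, ∀ (y : E ι) (c : ℝ), g x (c • y) = c ^ 2 * g x y)
    {x y : E ι} (hx : x ∈ U) (hy : y ≠ 0) (γ : ι) :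
    ∑ l, pdx (pdy g l) γ x y * y l = 2 * pdx g γ x y := by
  have hsopen : IsOpen (U ×ˢ {y : E ι | y ≠ 0}) := hU.prod isOpen_ne
  have hjd : DifferentiableAt ℝ (Function.uncurry g) (x, y) :=
    diffAt_of_contDiffOn hsopen hg ⟨hx, hy⟩
  have hgx : HasFDerivAt (fun x' => g x' y) (fderiv ℝ (fun x' => g x' y) x) x :=
    ((hasFDerivAt_sliceX hjd).differentiableAt).hasFDerivAt
  have hterm : ∀ l : ι, HasFDerivAt (fun x' => pdy g l x' y * y l)
      (y l • fderiv ℝ (fun x' => pdy g l x' y) x) x := by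
    intro l
    have h1 : DifferentiableAt ℝ (Function.uncurry (pdy g l)) (x, y) :=
      diffAt_of_contDiffOn hsopen (contDiffOn_pdy hsopen hg l) ⟨hx, hy⟩
    have h2 : HasFDerivAt (fun x' => pdy g l x' y)
        (fderiv ℝ (fun x' => pdy g l x' y) x) x :=
      ((hasFDerivAt_sliceX h1).differentiableAt).hasFDerivAt
    simpa [smul_smul, mul_comm] using h2.mul_const (y l)
  have hA : HasFDerivAt (fun x' => ∑ l, pdy g l x' y * y l)
      (∑ l, y l • fderiv ℝ (fun x' => pdy g l x' y) x) x :=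
    HasFDerivAt.fun_sum (fun l _ => hterm l)
  have hB : HasFDerivAt (fun x' => 2 * g x' y)
      ((2 : ℝ) • fderiv ℝ (fun x' => g x' y) x) x := hgx.const_mul 2
  have hev : (fun x' => ∑ l, pdy g l x' y * y l) =ᶠ[nhds x] (fun x' => 2 * g x' y) := by
    filter_upwards [hU.mem_nhds hx] with x' hx'
    exact euler0 hU hg hhom hx' hy
  have hA' : HasFDerivAt (fun x' => ∑ l, pdy g l x' y * y l)
      ((2 : ℝ) • fderiv ℝ (fun x' => g x' y) x) x := hB.congr_of_eventuallyEq hev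
  have huniq := hA.unique hA'
  have happ := congrArg (fun L => L (Pi.single γ 1)) huniq
  simp only [ContinuousLinearMap.sum_apply, ContinuousLinearMap.smul_apply,
    smul_eq_mul] at happ
  calc ∑ l, pdx (pdy g l) γ x y * y l
      = ∑ l, y l * fderiv ℝ (fun x' => pdy g l x' y) x (Pi.single γ 1) := by
        exact Finset.sum_congr rfl fun l _ => by rw [mul_comm]; rfl
    _ = 2 * fderiv ℝ (fun x' => g x' y) x (Pi.single γ 1) := happ
    _ = 2 * pdx g γ x y := rfl

end Euler

section Pullback

variable {m n : ℕ}

/-- projection onto first block as a continuous linear map -/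
noncomputable def T1 (m n : ℕ) : E (Fin m ⊕ Fin n) →L[ℝ] E (Fin m) :=
  ContinuousLinearMap.pi fun i => ContinuousLinearMap.proj (Sum.inl i)

noncomputable def T2 (m n : ℕ) : E (Fin m ⊕ Fin n) →L[ℝ] E (Fin n) :=
  ContinuousLinearMap.pi fun i => ContinuousLinearMap.proj (Sum.inr i)

lemma T1_apply (z : E (Fin m ⊕ Fin n)) : T1 m n z = z ∘ Sum.inl := rfl

lemma T2_apply (z : E (Fin m ⊕ Fin n)) : T2 m n z = z ∘ Sum.inr := rfl

lemma single_inl_comp_inl (j : Fin m) :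
    (Pi.single (Sum.inl j : Fin m ⊕ Fin n) (1 : ℝ)) ∘ Sum.inl = Pi.single j 1 := by
  funext i
  simp [Pi.single_apply, Function.comp]

lemma single_inr_comp_inl (j' : Fin n) :
    (Pi.single (Sum.inr j' : Fin m ⊕ Fin n) (1 : ℝ)) ∘ Sum.inl = 0 := by
  funext i
  simp [Pi.single_apply, Function.comp]

lemma single_inr_comp_inr (j' : Fin n) :
    (Pi.single (Sum.inr j' : Fin m ⊕ Fin n) (1 : ℝ)) ∘ Sum.inr = Pi.single j' 1 := by
  funext i
  simp [Pi.single_apply, Function.comp]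

lemma single_inl_comp_inr (j : Fin m) :
    (Pi.single (Sum.inl j : Fin m ⊕ Fin n) (1 : ℝ)) ∘ Sum.inr = 0 := by
  funext i
  simp [Pi.single_apply, Function.comp]

/-- pullback of a first-block function -/
def pb1 (φ : E (Fin m) → E (Fin m) → ℝ) : E (Fin m ⊕ Fin n) → E (Fin m ⊕ Fin n) → ℝ :=
  fun x y => φ (x ∘ Sum.inl) (y ∘ Sum.inl)

def pb2 (φ : E (Fin n) → E (Fin n) → ℝ) : E (Fin m ⊕ Fin n) → E (Fin m ⊕ Fin n) → ℝ :=
  fun x y => φ (x ∘ Sum.inr) (y ∘ Sum.inr)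

variable {φ : E (Fin m) → E (Fin m) → ℝ} {ψ : E (Fin n) → E (Fin n) → ℝ}
variable {x y : E (Fin m ⊕ Fin n)}

lemma pb1_sliceY_hasFDerivAt (hφ : DifferentiableAt ℝ (φ (x ∘ Sum.inl)) (y ∘ Sum.inl)) :
    HasFDerivAt (pb1 (n := n) φ x)
      ((fderiv ℝ (φ (x ∘ Sum.inl)) (y ∘ Sum.inl)).comp (T1 m n)) y := by
  have h1 : HasFDerivAt (T1 m n) (T1 m n) y := (T1 m n).hasFDerivAt
  have h2 : HasFDerivAt (φ (x ∘ Sum.inl)) (fderiv ℝ (φ (x ∘ Sum.inl)) (y ∘ Sum.inl))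
      (T1 m n y) := by rw [T1_apply]; exact hφ.hasFDerivAt
  exact h2.comp y h1

lemma pb1_pdy_inl (hφ : DifferentiableAt ℝ (φ (x ∘ Sum.inl)) (y ∘ Sum.inl)) (j : Fin m) :
    pdy (pb1 (n := n) φ) (Sum.inl j) x y = pdy φ j (x ∘ Sum.inl) (y ∘ Sum.inl) := by
  have h := (pb1_sliceY_hasFDerivAt hφ).fderiv
  show fderiv ℝ (pb1 φ x) y (Pi.single (Sum.inl j) 1) = _
  rw [h]
  simp only [ContinuousLinearMap.coe_comp', Function.comp_apply, T1_apply]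
  rw [single_inl_comp_inl]
  rfl

lemma pb1_pdy_inr (hφ : DifferentiableAt ℝ (φ (x ∘ Sum.inl)) (y ∘ Sum.inl)) (j' : Fin n) :
    pdy (pb1 (n := n) φ) (Sum.inr j') x y = 0 := by
  have h := (pb1_sliceY_hasFDerivAt hφ).fderiv
  show fderiv ℝ (pb1 φ x) y (Pi.single (Sum.inr j') 1) = _
  rw [h]
  simp only [ContinuousLinearMap.coe_comp', Function.comp_apply, T1_apply]
  rw [single_inr_comp_inl]
  simp

lemma pb1_sliceX_hasFDerivAt (hφ : DifferentiableAt ℝ (fun x' => φ x' (y ∘ Sum.inl))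
    (x ∘ Sum.inl)) :
    HasFDerivAt (fun x' => pb1 (n := n) φ x' y)
      ((fderiv ℝ (fun x' => φ x' (y ∘ Sum.inl)) (x ∘ Sum.inl)).comp (T1 m n)) x := by
  have h1 : HasFDerivAt (T1 m n) (T1 m n) x := (T1 m n).hasFDerivAt
  have h2 : HasFDerivAt (fun x' => φ x' (y ∘ Sum.inl))
      (fderiv ℝ (fun x' => φ x' (y ∘ Sum.inl)) (x ∘ Sum.inl)) (T1 m n x) := by
    rw [T1_apply]; exact hφ.hasFDerivAt
  exact h2.comp x h1

lemma pb1_pdx_inl (hφ : DifferentiableAt ℝ (fun x' => φ x' (y ∘ Sum.inl)) (x ∘ Sum.inl))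
    (γ : Fin m) :
    pdx (pb1 (n := n) φ) (Sum.inl γ) x y = pdx φ γ (x ∘ Sum.inl) (y ∘ Sum.inl) := by
  have h := (pb1_sliceX_hasFDerivAt hφ).fderiv
  show fderiv ℝ (fun x' => pb1 φ x' y) x (Pi.single (Sum.inl γ) 1) = _
  rw [h]
  simp only [ContinuousLinearMap.coe_comp', Function.comp_apply, T1_apply]
  rw [single_inl_comp_inl]
  rfl

lemma pb1_pdx_inr (hφ : DifferentiableAt ℝ (fun x' => φ x' (y ∘ Sum.inl)) (x ∘ Sum.inl))
    (γ' : Fin n) :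
    pdx (pb1 (n := n) φ) (Sum.inr γ') x y = 0 := by
  have h := (pb1_sliceX_hasFDerivAt hφ).fderiv
  show fderiv ℝ (fun x' => pb1 φ x' y) x (Pi.single (Sum.inr γ') 1) = _
  rw [h]
  simp only [ContinuousLinearMap.coe_comp', Function.comp_apply, T1_apply]
  rw [single_inr_comp_inl]
  simp

lemma pb2_sliceY_hasFDerivAt (hψ : DifferentiableAt ℝ (ψ (x ∘ Sum.inr)) (y ∘ Sum.inr)) :
    HasFDerivAt (pb2 (m := m) ψ x)
      ((fderiv ℝ (ψ (x ∘ Sum.inr)) (y ∘ Sum.inr)).comp (T2 m n)) y := by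
  have h1 : HasFDerivAt (T2 m n) (T2 m n) y := (T2 m n).hasFDerivAt
  have h2 : HasFDerivAt (ψ (x ∘ Sum.inr)) (fderiv ℝ (ψ (x ∘ Sum.inr)) (y ∘ Sum.inr))
      (T2 m n y) := by rw [T2_apply]; exact hψ.hasFDerivAt
  exact h2.comp y h1

lemma pb2_pdy_inr (hψ : DifferentiableAt ℝ (ψ (x ∘ Sum.inr)) (y ∘ Sum.inr)) (j' : Fin n) :
    pdy (pb2 (m := m) ψ) (Sum.inr j') x y = pdy ψ j' (x ∘ Sum.inr) (y ∘ Sum.inr) := by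
  have h := (pb2_sliceY_hasFDerivAt hψ).fderiv
  show fderiv ℝ (pb2 ψ x) y (Pi.single (Sum.inr j') 1) = _
  rw [h]
  simp only [ContinuousLinearMap.coe_comp', Function.comp_apply, T2_apply]
  rw [single_inr_comp_inr]
  rfl

lemma pb2_pdy_inl (hψ : DifferentiableAt ℝ (ψ (x ∘ Sum.inr)) (y ∘ Sum.inr)) (j : Fin m) :
    pdy (pb2 (m := m) ψ) (Sum.inl j) x y = 0 := by
  have h := (pb2_sliceY_hasFDerivAt hψ).fderiv
  show fderiv ℝ (pb2 ψ x) y (Pi.single (Sum.inl j) 1) = _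
  rw [h]
  simp only [ContinuousLinearMap.coe_comp', Function.comp_apply, T2_apply]
  rw [single_inl_comp_inr]
  simp

lemma pb2_sliceX_hasFDerivAt (hψ : DifferentiableAt ℝ (fun x' => ψ x' (y ∘ Sum.inr))
    (x ∘ Sum.inr)) :
    HasFDerivAt (fun x' => pb2 (m := m) ψ x' y)
      ((fderiv ℝ (fun x' => ψ x' (y ∘ Sum.inr)) (x ∘ Sum.inr)).comp (T2 m n)) x := by
  have h1 : HasFDerivAt (T2 m n) (T2 m n) x := (T2 m n).hasFDerivAt
  have h2 : HasFDerivAt (fun x' => ψ x' (y ∘ Sum.inr))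
      (fderiv ℝ (fun x' => ψ x' (y ∘ Sum.inr)) (x ∘ Sum.inr)) (T2 m n x) := by
    rw [T2_apply]; exact hψ.hasFDerivAt
  exact h2.comp x h1

lemma pb2_pdx_inr (hψ : DifferentiableAt ℝ (fun x' => ψ x' (y ∘ Sum.inr)) (x ∘ Sum.inr))
    (γ' : Fin n) :
    pdx (pb2 (m := m) ψ) (Sum.inr γ') x y = pdx ψ γ' (x ∘ Sum.inr) (y ∘ Sum.inr) := by
  have h := (pb2_sliceX_hasFDerivAt hψ).fderiv
  show fderiv ℝ (fun x' => pb2 ψ x' y) x (Pi.single (Sum.inr γ') 1) = _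
  rw [h]
  simp only [ContinuousLinearMap.coe_comp', Function.comp_apply, T2_apply]
  rw [single_inr_comp_inr]
  rfl

lemma pb2_pdx_inl (hψ : DifferentiableAt ℝ (fun x' => ψ x' (y ∘ Sum.inr)) (x ∘ Sum.inr))
    (γ : Fin m) :
    pdx (pb2 (m := m) ψ) (Sum.inl γ) x y = 0 := by
  have h := (pb2_sliceX_hasFDerivAt hψ).fderiv
  show fderiv ℝ (fun x' => pb2 ψ x' y) x (Pi.single (Sum.inl γ) 1) = _
  rw [h]
  simp only [ContinuousLinearMap.coe_comp', Function.comp_apply, T2_apply]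
  rw [single_inl_comp_inr]
  simp

end Pullback

section Comp2

variable {m n : ℕ}

/-- `g (K x₁ y₁) (H x₂ y₂)` as a function on the product space -/
def comp2 (g : ℝ → ℝ → ℝ) (K : E (Fin m) → E (Fin m) → ℝ) (H : E (Fin n) → E (Fin n) → ℝ) :
    E (Fin m ⊕ Fin n) → E (Fin m ⊕ Fin n) → ℝ :=
  fun x y => g (K (x ∘ Sum.inl) (y ∘ Sum.inl)) (H (x ∘ Sum.inr) (y ∘ Sum.inr))

variable {g : ℝ → ℝ → ℝ} {K : E (Fin m) → E (Fin m) → ℝ} {H : E (Fin n) → E (Fin n) → ℝ}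
variable {x y : E (Fin m ⊕ Fin n)}

lemma comp2_sliceY_hasFDerivAt
    (hg : DifferentiableAt ℝ (Function.uncurry g)
      (K (x ∘ Sum.inl) (y ∘ Sum.inl), H (x ∘ Sum.inr) (y ∘ Sum.inr)))
    (hK : DifferentiableAt ℝ (K (x ∘ Sum.inl)) (y ∘ Sum.inl))
    (hH : DifferentiableAt ℝ (H (x ∘ Sum.inr)) (y ∘ Sum.inr)) :
    HasFDerivAt (comp2 g K H x)
      ((fderiv ℝ (Function.uncurry g)
          (K (x ∘ Sum.inl) (y ∘ Sum.inl), H (x ∘ Sum.inr) (y ∘ Sum.inr))).comp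
        (((fderiv ℝ (K (x ∘ Sum.inl)) (y ∘ Sum.inl)).comp (T1 m n)).prod
          ((fderiv ℝ (H (x ∘ Sum.inr)) (y ∘ Sum.inr)).comp (T2 m n)))) y := by
  have hu := pb1_sliceY_hasFDerivAt (φ := K) (x := x) (y := y) hK
  have hv := pb2_sliceY_hasFDerivAt (ψ := H) (x := x) (y := y) hH
  have hpair := hu.prodMk hv
  exact (hg.hasFDerivAt.comp y hpair)

lemma comp2_pdy_inl
    (hg : DifferentiableAt ℝ (Function.uncurry g)
      (K (x ∘ Sum.inl) (y ∘ Sum.inl), H (x ∘ Sum.inr) (y ∘ Sum.inr)))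
    (hK : DifferentiableAt ℝ (K (x ∘ Sum.inl)) (y ∘ Sum.inl))
    (hH : DifferentiableAt ℝ (H (x ∘ Sum.inr)) (y ∘ Sum.inr)) (j : Fin m) :
    pdy (comp2 g K H) (Sum.inl j) x y =
      pderivS g (K (x ∘ Sum.inl) (y ∘ Sum.inl)) (H (x ∘ Sum.inr) (y ∘ Sum.inr)) *
        pdy K j (x ∘ Sum.inl) (y ∘ Sum.inl) := by
  have h := (comp2_sliceY_hasFDerivAt hg hK hH).fderiv
  show fderiv ℝ (comp2 g K H x) y (Pi.single (Sum.inl j) 1) = _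
  rw [h]
  simp only [ContinuousLinearMap.coe_comp', Function.comp_apply,
    ContinuousLinearMap.prod_apply, T1_apply, T2_apply]
  rw [single_inl_comp_inl, single_inl_comp_inr]
  rw [fderiv_uncurry_apply hg]
  simp only [map_zero, mul_zero, zero_mul, add_zero]
  rw [mul_comm]
  rfl

lemma comp2_pdy_inr
    (hg : DifferentiableAt ℝ (Function.uncurry g)
      (K (x ∘ Sum.inl) (y ∘ Sum.inl), H (x ∘ Sum.inr) (y ∘ Sum.inr)))
    (hK : DifferentiableAt ℝ (K (x ∘ Sum.inl)) (y ∘ Sum.inl))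
    (hH : DifferentiableAt ℝ (H (x ∘ Sum.inr)) (y ∘ Sum.inr)) (j' : Fin n) :
    pdy (comp2 g K H) (Sum.inr j') x y =
      pderivT g (K (x ∘ Sum.inl) (y ∘ Sum.inl)) (H (x ∘ Sum.inr) (y ∘ Sum.inr)) *
        pdy H j' (x ∘ Sum.inr) (y ∘ Sum.inr) := by
  have h := (comp2_sliceY_hasFDerivAt hg hK hH).fderiv
  show fderiv ℝ (comp2 g K H x) y (Pi.single (Sum.inr j') 1) = _
  rw [h]
  simp only [ContinuousLinearMap.coe_comp', Function.comp_apply,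
    ContinuousLinearMap.prod_apply, T1_apply, T2_apply]
  rw [single_inr_comp_inl, single_inr_comp_inr]
  rw [fderiv_uncurry_apply hg]
  simp only [map_zero, zero_mul, mul_zero, zero_add]
  rw [mul_comm]
  rfl

lemma comp2_sliceX_hasFDerivAt
    (hg : DifferentiableAt ℝ (Function.uncurry g)
      (K (x ∘ Sum.inl) (y ∘ Sum.inl), H (x ∘ Sum.inr) (y ∘ Sum.inr)))
    (hK : DifferentiableAt ℝ (fun x' => K x' (y ∘ Sum.inl)) (x ∘ Sum.inl))
    (hH : DifferentiableAt ℝ (fun x' => H x' (y ∘ Sum.inr)) (x ∘ Sum.inr)) :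
    HasFDerivAt (fun x' => comp2 g K H x' y)
      ((fderiv ℝ (Function.uncurry g)
          (K (x ∘ Sum.inl) (y ∘ Sum.inl), H (x ∘ Sum.inr) (y ∘ Sum.inr))).comp
        (((fderiv ℝ (fun x' => K x' (y ∘ Sum.inl)) (x ∘ Sum.inl)).comp (T1 m n)).prod
          ((fderiv ℝ (fun x' => H x' (y ∘ Sum.inr)) (x ∘ Sum.inr)).comp (T2 m n)))) x := by
  have hu := pb1_sliceX_hasFDerivAt (φ := K) (x := x) (y := y) hK
  have hv := pb2_sliceX_hasFDerivAt (ψ := H) (x := x) (y := y) hH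
  have hpair := hu.prodMk hv
  exact (hg.hasFDerivAt.comp x hpair)

lemma comp2_pdx_inl
    (hg : DifferentiableAt ℝ (Function.uncurry g)
      (K (x ∘ Sum.inl) (y ∘ Sum.inl), H (x ∘ Sum.inr) (y ∘ Sum.inr)))
    (hK : DifferentiableAt ℝ (fun x' => K x' (y ∘ Sum.inl)) (x ∘ Sum.inl))
    (hH : DifferentiableAt ℝ (fun x' => H x' (y ∘ Sum.inr)) (x ∘ Sum.inr)) (γ : Fin m) :
    pdx (comp2 g K H) (Sum.inl γ) x y =
      pderivS g (K (x ∘ Sum.inl) (y ∘ Sum.inl)) (H (x ∘ Sum.inr) (y ∘ Sum.inr)) *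
        pdx K γ (x ∘ Sum.inl) (y ∘ Sum.inl) := by
  have h := (comp2_sliceX_hasFDerivAt hg hK hH).fderiv
  show fderiv ℝ (fun x' => comp2 g K H x' y) x (Pi.single (Sum.inl γ) 1) = _
  rw [h]
  simp only [ContinuousLinearMap.coe_comp', Function.comp_apply,
    ContinuousLinearMap.prod_apply, T1_apply, T2_apply]
  rw [single_inl_comp_inl, single_inl_comp_inr]
  rw [fderiv_uncurry_apply hg]
  simp only [map_zero, mul_zero, zero_mul, add_zero]
  rw [mul_comm]
  rfl

lemma comp2_pdx_inr
    (hg : DifferentiableAt ℝ (Function.uncurry g)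
      (K (x ∘ Sum.inl) (y ∘ Sum.inl), H (x ∘ Sum.inr) (y ∘ Sum.inr)))
    (hK : DifferentiableAt ℝ (fun x' => K x' (y ∘ Sum.inl)) (x ∘ Sum.inl))
    (hH : DifferentiableAt ℝ (fun x' => H x' (y ∘ Sum.inr)) (x ∘ Sum.inr)) (γ' : Fin n) :
    pdx (comp2 g K H) (Sum.inr γ') x y =
      pderivT g (K (x ∘ Sum.inl) (y ∘ Sum.inl)) (H (x ∘ Sum.inr) (y ∘ Sum.inr)) *
        pdx H γ' (x ∘ Sum.inr) (y ∘ Sum.inr) := by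
  have h := (comp2_sliceX_hasFDerivAt hg hK hH).fderiv
  show fderiv ℝ (fun x' => comp2 g K H x' y) x (Pi.single (Sum.inr γ') 1) = _
  rw [h]
  simp only [ContinuousLinearMap.coe_comp', Function.comp_apply,
    ContinuousLinearMap.prod_apply, T1_apply, T2_apply]
  rw [single_inr_comp_inl, single_inr_comp_inr]
  rw [fderiv_uncurry_apply hg]
  simp only [map_zero, zero_mul, mul_zero, zero_add]
  rw [mul_comm]
  rfl

end Comp2

section MulRules

variable {ι : Type*} [Fintype ι] [DecidableEq ι] {a b : E ι → E ι → ℝ} {x y : E ι}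

lemma pdy_mul (ha : DifferentiableAt ℝ (a x) y) (hb : DifferentiableAt ℝ (b x) y) (α : ι) :
    pdy (fun x' y' => a x' y' * b x' y') α x y =
      pdy a α x y * b x y + a x y * pdy b α x y := by
  show fderiv ℝ (fun y' => a x y' * b x y') y (Pi.single α 1) = _
  rw [fderiv_fun_mul ha hb]
  simp only [ContinuousLinearMap.add_apply, ContinuousLinearMap.smul_apply, smul_eq_mul]
  ring_nf
  rfl

lemma pdx_mul (ha : DifferentiableAt ℝ (fun x' => a x' y) x)
    (hb : DifferentiableAt ℝ (fun x' => b x' y) x) (γ : ι) :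
    pdx (fun x' y' => a x' y' * b x' y') γ x y =
      pdx a γ x y * b x y + a x y * pdx b γ x y := by
  show fderiv ℝ (fun x' => a x' y * b x' y) x (Pi.single γ 1) = _
  rw [fderiv_fun_mul ha hb]
  simp only [ContinuousLinearMap.add_apply, ContinuousLinearMap.smul_apply, smul_eq_mul]
  ring_nf
  rfl

end MulRules

section Main

/-- square of a metric -/
def sq2 {κ : Type*} [Fintype κ] [DecidableEq κ] (Φ : E κ → E κ → ℝ) : E κ → E κ → ℝ :=
  fun x y => Φ x y ^ 2

lemma diffAt_of_contDiffOn' {X : Type*} [NormedAddCommGroup X] [NormedSpace ℝ X]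
    {s : Set X} {g : X → ℝ} (hs : IsOpen s) (hg : ContDiffOn ℝ (⊤ : ℕ∞) g s)
    {p : X} (hp : p ∈ s) : DifferentiableAt ℝ g p :=
  (hg.differentiableOn (by simp)).differentiableAt (hs.mem_nhds hp)

variable {ι : Type*} [Fintype ι] [DecidableEq ι]

lemma sliceY_diffAt {g : E ι → E ι → ℝ} {s : Set (E ι × E ι)} (hs : IsOpen s)
    (hg : ContDiffOn ℝ (⊤ : ℕ∞) (Function.uncurry g) s) {x y : E ι} (hp : (x, y) ∈ s) :
    DifferentiableAt ℝ (g x) y :=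
  (hasFDerivAt_sliceY (diffAt_of_contDiffOn hs hg hp)).differentiableAt

lemma sliceX_diffAt {g : E ι → E ι → ℝ} {s : Set (E ι × E ι)} (hs : IsOpen s)
    (hg : ContDiffOn ℝ (⊤ : ℕ∞) (Function.uncurry g) s) {x y : E ι} (hp : (x, y) ∈ s) :
    DifferentiableAt ℝ (fun x' => g x' y) x :=
  (hasFDerivAt_sliceX (diffAt_of_contDiffOn hs hg hp)).differentiableAt

variable {m n : ℕ} {U₁ : Set (E (Fin m))} {U₂ : Set (E (Fin n))}
  {F₁ : E (Fin m) → E (Fin m) → ℝ} {F₂ : E (Fin n) → E (Fin n) → ℝ}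
  {f : ℝ → ℝ → ℝ} {F : E (Fin m ⊕ Fin n) → E (Fin m ⊕ Fin n) → ℝ}

/-- the good open set -/
def Om (U₁ : Set (E (Fin m))) (U₂ : Set (E (Fin n))) :
    Set (E (Fin m ⊕ Fin n) × E (Fin m ⊕ Fin n)) :=
  {p | p.1 ∘ Sum.inl ∈ U₁ ∧ p.1 ∘ Sum.inr ∈ U₂ ∧
    p.2 ∘ Sum.inl ≠ 0 ∧ p.2 ∘ Sum.inr ≠ 0}

lemma Om_open (hU₁ : IsOpen U₁) (hU₂ : IsOpen U₂) : IsOpen (Om U₁ U₂) := by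
  have heq : Om U₁ U₂ =
      ((fun p : E (Fin m ⊕ Fin n) × E (Fin m ⊕ Fin n) => p.1 ∘ Sum.inl) ⁻¹' U₁) ∩
      (((fun p : E (Fin m ⊕ Fin n) × E (Fin m ⊕ Fin n) => p.1 ∘ Sum.inr) ⁻¹' U₂) ∩
      (((fun p : E (Fin m ⊕ Fin n) × E (Fin m ⊕ Fin n) => p.2 ∘ Sum.inl) ⁻¹'
          {z : E (Fin m) | z ≠ 0}) ∩
        ((fun p : E (Fin m ⊕ Fin n) × E (Fin m ⊕ Fin n) => p.2 ∘ Sum.inr) ⁻¹'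
          {z : E (Fin n) | z ≠ 0}))) := rfl
  rw [heq]
  have c1 : Continuous fun p : E (Fin m ⊕ Fin n) × E (Fin m ⊕ Fin n) => p.1 ∘ Sum.inl :=
    (T1 m n).continuous.comp continuous_fst
  have c2 : Continuous fun p : E (Fin m ⊕ Fin n) × E (Fin m ⊕ Fin n) => p.1 ∘ Sum.inr :=
    (T2 m n).continuous.comp continuous_fst
  have c3 : Continuous fun p : E (Fin m ⊕ Fin n) × E (Fin m ⊕ Fin n) => p.2 ∘ Sum.inl :=
    (T1 m n).continuous.comp continuous_snd
  have c4 : Continuous fun p : E (Fin m ⊕ Fin n) × E (Fin m ⊕ Fin n) => p.2 ∘ Sum.inr :=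
    (T2 m n).continuous.comp continuous_snd
  exact (hU₁.preimage c1).inter ((hU₂.preimage c2).inter
    ((isOpen_ne.preimage c3).inter (isOpen_ne.preimage c4)))

lemma Iopen : IsOpen (Set.Ioi (0:ℝ) ×ˢ Set.Ioi (0:ℝ)) := isOpen_Ioi.prod isOpen_Ioi

section WithProd

variable (hprod : IsMinkowskianProduct U₁ U₂ F₁ F₂ f F)

include hprod

lemma hG_eq : sq2 F = comp2 f (sq2 F₁) (sq2 F₂) := by
  funext x y
  show F x y ^ 2 = _
  rw [hprod.F_def]
  exact Real.sq_sqrt (hprod.f_nonneg _ (Set.mem_Ici.2 (sq_nonneg _)) _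
    (Set.mem_Ici.2 (sq_nonneg _)))

lemma hK_smooth : ContDiffOn ℝ (⊤ : ℕ∞) (Function.uncurry (sq2 F₁))
    (U₁ ×ˢ {z : E (Fin m) | z ≠ 0}) := hprod.finsler₁.smooth

lemma hH_smooth : ContDiffOn ℝ (⊤ : ℕ∞) (Function.uncurry (sq2 F₂))
    (U₂ ×ˢ {z : E (Fin n) | z ≠ 0}) := hprod.finsler₂.smooth

lemma O1_open :
    IsOpen (U₁ ×ˢ {z : E (Fin m) | z ≠ 0}) :=
  hprod.finsler₁.isOpen.prod isOpen_ne

lemma O2_open :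
    IsOpen (U₂ ×ˢ {z : E (Fin n) | z ≠ 0}) :=
  hprod.finsler₂.isOpen.prod isOpen_ne

variable {x y : E (Fin m ⊕ Fin n)}

lemma st_mem (hO : ((x, y) : _ × _) ∈ Om U₁ U₂) :
    ((sq2 F₁ (x ∘ Sum.inl) (y ∘ Sum.inl), sq2 F₂ (x ∘ Sum.inr) (y ∘ Sum.inr)) : ℝ × ℝ) ∈
      Set.Ioi (0:ℝ) ×ˢ Set.Ioi (0:ℝ) := by
  obtain ⟨h1, h2, h3, h4⟩ := hO
  constructor
  · exact pow_pos (hprod.finsler₁.pos _ h1 _ h3) 2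
  · exact pow_pos (hprod.finsler₂.pos _ h2 _ h4) 2

/-- the uncurried `f`-smoothness -/
lemma f_unc_smooth : ContDiffOn ℝ (⊤ : ℕ∞) (Function.uncurry f)
    (Set.Ioi (0:ℝ) ×ˢ Set.Ioi (0:ℝ)) := hprod.f_smooth

end WithProd

end Main

section Derivs

variable {m n : ℕ} {U₁ : Set (E (Fin m))} {U₂ : Set (E (Fin n))}
  {F₁ : E (Fin m) → E (Fin m) → ℝ} {F₂ : E (Fin n) → E (Fin n) → ℝ}
  {f : ℝ → ℝ → ℝ} {F : E (Fin m ⊕ Fin n) → E (Fin m ⊕ Fin n) → ℝ}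
  (hprod : IsMinkowskianProduct U₁ U₂ F₁ F₂ f F)

include hprod

lemma Kmem {x y : E (Fin m ⊕ Fin n)} (hO : ((x, y) : _ × _) ∈ Om U₁ U₂) :
    ((x ∘ Sum.inl, y ∘ Sum.inl) : _ × _) ∈ U₁ ×ˢ {z : E (Fin m) | z ≠ 0} :=
  ⟨hO.1, hO.2.2.1⟩

lemma Hmem {x y : E (Fin m ⊕ Fin n)} (hO : ((x, y) : _ × _) ∈ Om U₁ U₂) :
    ((x ∘ Sum.inr, y ∘ Sum.inr) : _ × _) ∈ U₂ ×ˢ {z : E (Fin n) | z ≠ 0} :=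
  ⟨hO.2.1, hO.2.2.2⟩

/-- differentiability of g-type functions at the base point -/
lemma gdiff {g : ℝ → ℝ → ℝ}
    (hg : ContDiffOn ℝ (⊤ : ℕ∞) (Function.uncurry g) (Set.Ioi (0:ℝ) ×ˢ Set.Ioi (0:ℝ)))
    {x y : E (Fin m ⊕ Fin n)} (hO : ((x, y) : _ × _) ∈ Om U₁ U₂) :
    DifferentiableAt ℝ (Function.uncurry g)
      (sq2 F₁ (x ∘ Sum.inl) (y ∘ Sum.inl), sq2 F₂ (x ∘ Sum.inr) (y ∘ Sum.inr)) :=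
  diffAt_of_contDiffOn' Iopen hg (st_mem hprod hO)

lemma fdiff {x y : E (Fin m ⊕ Fin n)} (hO : ((x, y) : _ × _) ∈ Om U₁ U₂) :
    DifferentiableAt ℝ (Function.uncurry f)
      (sq2 F₁ (x ∘ Sum.inl) (y ∘ Sum.inl), sq2 F₂ (x ∘ Sum.inr) (y ∘ Sum.inr)) :=
  gdiff hprod (f_unc_smooth hprod) hO

lemma fSdiff {x y : E (Fin m ⊕ Fin n)} (hO : ((x, y) : _ × _) ∈ Om U₁ U₂) :
    DifferentiableAt ℝ (Function.uncurry (pderivS f))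
      (sq2 F₁ (x ∘ Sum.inl) (y ∘ Sum.inl), sq2 F₂ (x ∘ Sum.inr) (y ∘ Sum.inr)) :=
  gdiff hprod (contDiffOn_pderivS Iopen (f_unc_smooth hprod)) hO

lemma fTdiff {x y : E (Fin m ⊕ Fin n)} (hO : ((x, y) : _ × _) ∈ Om U₁ U₂) :
    DifferentiableAt ℝ (Function.uncurry (pderivT f))
      (sq2 F₁ (x ∘ Sum.inl) (y ∘ Sum.inl), sq2 F₂ (x ∘ Sum.inr) (y ∘ Sum.inr)) :=
  gdiff hprod (contDiffOn_pderivT Iopen (f_unc_smooth hprod)) hO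

-- M1 : first derivatives of G on Om
lemma pdyG_inl (j : Fin m) : ∀ x' y', ((x', y') : _ × _) ∈ Om (U₁ := U₁) U₂ →
    pdy (sq2 F) (Sum.inl j) x' y' =
      comp2 (pderivS f) (sq2 F₁) (sq2 F₂) x' y' * pb1 (pdy (sq2 F₁) j) x' y' := by
  intro x y hO
  rw [hG_eq hprod]
  exact comp2_pdy_inl (fdiff hprod hO)
    (sliceY_diffAt (O1_open hprod) (hK_smooth hprod) (Kmem hprod hO))
    (sliceY_diffAt (O2_open hprod) (hH_smooth hprod) (Hmem hprod hO)) j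

lemma pdyG_inr (j' : Fin n) : ∀ x' y', ((x', y') : _ × _) ∈ Om (U₁ := U₁) U₂ →
    pdy (sq2 F) (Sum.inr j') x' y' =
      comp2 (pderivT f) (sq2 F₁) (sq2 F₂) x' y' * pb2 (pdy (sq2 F₂) j') x' y' := by
  intro x y hO
  rw [hG_eq hprod]
  exact comp2_pdy_inr (fdiff hprod hO)
    (sliceY_diffAt (O1_open hprod) (hK_smooth hprod) (Kmem hprod hO))
    (sliceY_diffAt (O2_open hprod) (hH_smooth hprod) (Hmem hprod hO)) j'

lemma pdxG_inl (γ : Fin m) : ∀ x' y', ((x', y') : _ × _) ∈ Om (U₁ := U₁) U₂ →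
    pdx (sq2 F) (Sum.inl γ) x' y' =
      comp2 (pderivS f) (sq2 F₁) (sq2 F₂) x' y' * pb1 (pdx (sq2 F₁) γ) x' y' := by
  intro x y hO
  rw [hG_eq hprod]
  exact comp2_pdx_inl (fdiff hprod hO)
    (sliceX_diffAt (O1_open hprod) (hK_smooth hprod) (Kmem hprod hO))
    (sliceX_diffAt (O2_open hprod) (hH_smooth hprod) (Hmem hprod hO)) γ

lemma pdxG_inr (γ' : Fin n) : ∀ x' y', ((x', y') : _ × _) ∈ Om (U₁ := U₁) U₂ →
    pdx (sq2 F) (Sum.inr γ') x' y' =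
      comp2 (pderivT f) (sq2 F₁) (sq2 F₂) x' y' * pb2 (pdx (sq2 F₂) γ') x' y' := by
  intro x y hO
  rw [hG_eq hprod]
  exact comp2_pdx_inr (fdiff hprod hO)
    (sliceX_diffAt (O1_open hprod) (hK_smooth hprod) (Kmem hprod hO))
    (sliceX_diffAt (O2_open hprod) (hH_smooth hprod) (Hmem hprod hO)) γ'

end Derivs

section SecondDerivs

variable {m n : ℕ} {U₁ : Set (E (Fin m))} {U₂ : Set (E (Fin n))}
  {F₁ : E (Fin m) → E (Fin m) → ℝ} {F₂ : E (Fin n) → E (Fin n) → ℝ}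
  {f : ℝ → ℝ → ℝ} {F : E (Fin m ⊕ Fin n) → E (Fin m ⊕ Fin n) → ℝ}
  (hprod : IsMinkowskianProduct U₁ U₂ F₁ F₂ f F)
  {x y : E (Fin m ⊕ Fin n)}

include hprod

lemma fund_ll (hO : ((x, y) : _ × _) ∈ Om U₁ U₂) (j l : Fin m) :
    fundTensor F x y (Sum.inl j) (Sum.inl l) =
      comp2 (pderivS (pderivS f)) (sq2 F₁) (sq2 F₂) x y *
        pb1 (pdy (sq2 F₁) j) x y * pb1 (pdy (sq2 F₁) l) x y +
      comp2 (pderivS f) (sq2 F₁) (sq2 F₂) x y *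
        fundTensor F₁ (x ∘ Sum.inl) (y ∘ Sum.inl) j l := by
  have hOo : IsOpen (Om (U₁ := U₁) U₂) := Om_open hprod.finsler₁.isOpen hprod.finsler₂.isOpen
  have hKy := sliceY_diffAt (O1_open hprod) (hK_smooth hprod) (Kmem hprod hO)
  have hHy := sliceY_diffAt (O2_open hprod) (hH_smooth hprod) (Hmem hprod hO)
  have hdKl := sliceY_diffAt (O1_open hprod)
    (contDiffOn_pdy (O1_open hprod) (hK_smooth hprod) l) (Kmem hprod hO)
  have haS : DifferentiableAt ℝ (comp2 (pderivS f) (sq2 F₁) (sq2 F₂) x) y :=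
    (comp2_sliceY_hasFDerivAt (fSdiff hprod hO) hKy hHy).differentiableAt
  have hbl : DifferentiableAt ℝ (pb1 (n := n) (pdy (sq2 F₁) l) x) y :=
    (pb1_sliceY_hasFDerivAt hdKl).differentiableAt
  have h1 : fundTensor F x y (Sum.inl j) (Sum.inl l) =
      pdy (pdy (sq2 F) (Sum.inl l)) (Sum.inl j) x y := rfl
  rw [h1, pdy_congr hOo (pdyG_inl hprod l) hO (Sum.inl j),
    pdy_mul (a := comp2 (pderivS f) (sq2 F₁) (sq2 F₂)) (b := pb1 (pdy (sq2 F₁) l)) haS hbl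
      (Sum.inl j),
    comp2_pdy_inl (fSdiff hprod hO) hKy hHy j, pb1_pdy_inl hdKl j]
  rfl

lemma fund_lr (hO : ((x, y) : _ × _) ∈ Om U₁ U₂) (j : Fin m) (l' : Fin n) :
    fundTensor F x y (Sum.inl j) (Sum.inr l') =
      comp2 (pderivS (pderivT f)) (sq2 F₁) (sq2 F₂) x y *
        pb1 (pdy (sq2 F₁) j) x y * pb2 (pdy (sq2 F₂) l') x y := by
  have hOo : IsOpen (Om (U₁ := U₁) U₂) := Om_open hprod.finsler₁.isOpen hprod.finsler₂.isOpen
  have hKy := sliceY_diffAt (O1_open hprod) (hK_smooth hprod) (Kmem hprod hO)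
  have hHy := sliceY_diffAt (O2_open hprod) (hH_smooth hprod) (Hmem hprod hO)
  have hdHl := sliceY_diffAt (O2_open hprod)
    (contDiffOn_pdy (O2_open hprod) (hH_smooth hprod) l') (Hmem hprod hO)
  have haT : DifferentiableAt ℝ (comp2 (pderivT f) (sq2 F₁) (sq2 F₂) x) y :=
    (comp2_sliceY_hasFDerivAt (fTdiff hprod hO) hKy hHy).differentiableAt
  have hbl : DifferentiableAt ℝ (pb2 (m := m) (pdy (sq2 F₂) l') x) y :=
    (pb2_sliceY_hasFDerivAt hdHl).differentiableAt
  have h1 : fundTensor F x y (Sum.inl j) (Sum.inr l') =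
      pdy (pdy (sq2 F) (Sum.inr l')) (Sum.inl j) x y := rfl
  rw [h1, pdy_congr hOo (pdyG_inr hprod l') hO (Sum.inl j),
    pdy_mul (a := comp2 (pderivT f) (sq2 F₁) (sq2 F₂)) (b := pb2 (pdy (sq2 F₂) l')) haT hbl
      (Sum.inl j),
    comp2_pdy_inl (fTdiff hprod hO) hKy hHy j, pb2_pdy_inl hdHl j]
  rw [mul_zero, add_zero]
  rfl

lemma fund_rl (hO : ((x, y) : _ × _) ∈ Om U₁ U₂) (j' : Fin n) (l : Fin m) :
    fundTensor F x y (Sum.inr j') (Sum.inl l) =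
      comp2 (pderivT (pderivS f)) (sq2 F₁) (sq2 F₂) x y *
        pb2 (pdy (sq2 F₂) j') x y * pb1 (pdy (sq2 F₁) l) x y := by
  have hOo : IsOpen (Om (U₁ := U₁) U₂) := Om_open hprod.finsler₁.isOpen hprod.finsler₂.isOpen
  have hKy := sliceY_diffAt (O1_open hprod) (hK_smooth hprod) (Kmem hprod hO)
  have hHy := sliceY_diffAt (O2_open hprod) (hH_smooth hprod) (Hmem hprod hO)
  have hdKl := sliceY_diffAt (O1_open hprod)
    (contDiffOn_pdy (O1_open hprod) (hK_smooth hprod) l) (Kmem hprod hO)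
  have haS : DifferentiableAt ℝ (comp2 (pderivS f) (sq2 F₁) (sq2 F₂) x) y :=
    (comp2_sliceY_hasFDerivAt (fSdiff hprod hO) hKy hHy).differentiableAt
  have hbl : DifferentiableAt ℝ (pb1 (n := n) (pdy (sq2 F₁) l) x) y :=
    (pb1_sliceY_hasFDerivAt hdKl).differentiableAt
  have h1 : fundTensor F x y (Sum.inr j') (Sum.inl l) =
      pdy (pdy (sq2 F) (Sum.inl l)) (Sum.inr j') x y := rfl
  rw [h1, pdy_congr hOo (pdyG_inl hprod l) hO (Sum.inr j'),
    pdy_mul (a := comp2 (pderivS f) (sq2 F₁) (sq2 F₂)) (b := pb1 (pdy (sq2 F₁) l)) haS hbl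
      (Sum.inr j'),
    comp2_pdy_inr (fSdiff hprod hO) hKy hHy j', pb1_pdy_inr hdKl j']
  rw [mul_zero, add_zero]
  rfl

lemma fund_rr (hO : ((x, y) : _ × _) ∈ Om U₁ U₂) (j' l' : Fin n) :
    fundTensor F x y (Sum.inr j') (Sum.inr l') =
      comp2 (pderivT (pderivT f)) (sq2 F₁) (sq2 F₂) x y *
        pb2 (pdy (sq2 F₂) j') x y * pb2 (pdy (sq2 F₂) l') x y +
      comp2 (pderivT f) (sq2 F₁) (sq2 F₂) x y *
        fundTensor F₂ (x ∘ Sum.inr) (y ∘ Sum.inr) j' l' := by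
  have hOo : IsOpen (Om (U₁ := U₁) U₂) := Om_open hprod.finsler₁.isOpen hprod.finsler₂.isOpen
  have hKy := sliceY_diffAt (O1_open hprod) (hK_smooth hprod) (Kmem hprod hO)
  have hHy := sliceY_diffAt (O2_open hprod) (hH_smooth hprod) (Hmem hprod hO)
  have hdHl := sliceY_diffAt (O2_open hprod)
    (contDiffOn_pdy (O2_open hprod) (hH_smooth hprod) l') (Hmem hprod hO)
  have haT : DifferentiableAt ℝ (comp2 (pderivT f) (sq2 F₁) (sq2 F₂) x) y :=
    (comp2_sliceY_hasFDerivAt (fTdiff hprod hO) hKy hHy).differentiableAt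
  have hbl : DifferentiableAt ℝ (pb2 (m := m) (pdy (sq2 F₂) l') x) y :=
    (pb2_sliceY_hasFDerivAt hdHl).differentiableAt
  have h1 : fundTensor F x y (Sum.inr j') (Sum.inr l') =
      pdy (pdy (sq2 F) (Sum.inr l')) (Sum.inr j') x y := rfl
  rw [h1, pdy_congr hOo (pdyG_inr hprod l') hO (Sum.inr j'),
    pdy_mul (a := comp2 (pderivT f) (sq2 F₁) (sq2 F₂)) (b := pb2 (pdy (sq2 F₂) l')) haT hbl
      (Sum.inr j'),
    comp2_pdy_inr (fTdiff hprod hO) hKy hHy j', pb2_pdy_inr hdHl j']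
  rfl

lemma pdxy_ll (hO : ((x, y) : _ × _) ∈ Om U₁ U₂) (j γ : Fin m) :
    pdx (pdy (sq2 F) (Sum.inl j)) (Sum.inl γ) x y =
      comp2 (pderivS (pderivS f)) (sq2 F₁) (sq2 F₂) x y *
        pb1 (pdx (sq2 F₁) γ) x y * pb1 (pdy (sq2 F₁) j) x y +
      comp2 (pderivS f) (sq2 F₁) (sq2 F₂) x y *
        pb1 (pdx (pdy (sq2 F₁) j) γ) x y := by
  have hOo : IsOpen (Om (U₁ := U₁) U₂) := Om_open hprod.finsler₁.isOpen hprod.finsler₂.isOpen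
  have hKx := sliceX_diffAt (O1_open hprod) (hK_smooth hprod) (Kmem hprod hO)
  have hHx := sliceX_diffAt (O2_open hprod) (hH_smooth hprod) (Hmem hprod hO)
  have hdKj := sliceX_diffAt (O1_open hprod)
    (contDiffOn_pdy (O1_open hprod) (hK_smooth hprod) j) (Kmem hprod hO)
  have haS : DifferentiableAt ℝ (fun x' => comp2 (pderivS f) (sq2 F₁) (sq2 F₂) x' y) x :=
    (comp2_sliceX_hasFDerivAt (fSdiff hprod hO) hKx hHx).differentiableAt
  have hbl : DifferentiableAt ℝ (fun x' => pb1 (n := n) (pdy (sq2 F₁) j) x' y) x :=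
    (pb1_sliceX_hasFDerivAt hdKj).differentiableAt
  rw [pdx_congr hOo (pdyG_inl hprod j) hO (Sum.inl γ),
    pdx_mul (a := comp2 (pderivS f) (sq2 F₁) (sq2 F₂)) (b := pb1 (pdy (sq2 F₁) j)) haS hbl
      (Sum.inl γ),
    comp2_pdx_inl (fSdiff hprod hO) hKx hHx γ, pb1_pdx_inl hdKj γ]
  rfl

lemma pdxy_lr (hO : ((x, y) : _ × _) ∈ Om U₁ U₂) (j : Fin m) (γ' : Fin n) :
    pdx (pdy (sq2 F) (Sum.inl j)) (Sum.inr γ') x y =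
      comp2 (pderivT (pderivS f)) (sq2 F₁) (sq2 F₂) x y *
        pb2 (pdx (sq2 F₂) γ') x y * pb1 (pdy (sq2 F₁) j) x y := by
  have hOo : IsOpen (Om (U₁ := U₁) U₂) := Om_open hprod.finsler₁.isOpen hprod.finsler₂.isOpen
  have hKx := sliceX_diffAt (O1_open hprod) (hK_smooth hprod) (Kmem hprod hO)
  have hHx := sliceX_diffAt (O2_open hprod) (hH_smooth hprod) (Hmem hprod hO)
  have hdKj := sliceX_diffAt (O1_open hprod)
    (contDiffOn_pdy (O1_open hprod) (hK_smooth hprod) j) (Kmem hprod hO)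
  have haS : DifferentiableAt ℝ (fun x' => comp2 (pderivS f) (sq2 F₁) (sq2 F₂) x' y) x :=
    (comp2_sliceX_hasFDerivAt (fSdiff hprod hO) hKx hHx).differentiableAt
  have hbl : DifferentiableAt ℝ (fun x' => pb1 (n := n) (pdy (sq2 F₁) j) x' y) x :=
    (pb1_sliceX_hasFDerivAt hdKj).differentiableAt
  rw [pdx_congr hOo (pdyG_inl hprod j) hO (Sum.inr γ'),
    pdx_mul (a := comp2 (pderivS f) (sq2 F₁) (sq2 F₂)) (b := pb1 (pdy (sq2 F₁) j)) haS hbl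
      (Sum.inr γ'),
    comp2_pdx_inr (fSdiff hprod hO) hKx hHx γ', pb1_pdx_inr hdKj γ']
  rw [mul_zero, add_zero]
  rfl

lemma pdxy_rl (hO : ((x, y) : _ × _) ∈ Om U₁ U₂) (j' : Fin n) (γ : Fin m) :
    pdx (pdy (sq2 F) (Sum.inr j')) (Sum.inl γ) x y =
      comp2 (pderivS (pderivT f)) (sq2 F₁) (sq2 F₂) x y *
        pb1 (pdx (sq2 F₁) γ) x y * pb2 (pdy (sq2 F₂) j') x y := by
  have hOo : IsOpen (Om (U₁ := U₁) U₂) := Om_open hprod.finsler₁.isOpen hprod.finsler₂.isOpen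
  have hKx := sliceX_diffAt (O1_open hprod) (hK_smooth hprod) (Kmem hprod hO)
  have hHx := sliceX_diffAt (O2_open hprod) (hH_smooth hprod) (Hmem hprod hO)
  have hdHj := sliceX_diffAt (O2_open hprod)
    (contDiffOn_pdy (O2_open hprod) (hH_smooth hprod) j') (Hmem hprod hO)
  have haT : DifferentiableAt ℝ (fun x' => comp2 (pderivT f) (sq2 F₁) (sq2 F₂) x' y) x :=
    (comp2_sliceX_hasFDerivAt (fTdiff hprod hO) hKx hHx).differentiableAt
  have hbl : DifferentiableAt ℝ (fun x' => pb2 (m := m) (pdy (sq2 F₂) j') x' y) x :=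
    (pb2_sliceX_hasFDerivAt hdHj).differentiableAt
  rw [pdx_congr hOo (pdyG_inr hprod j') hO (Sum.inl γ),
    pdx_mul (a := comp2 (pderivT f) (sq2 F₁) (sq2 F₂)) (b := pb2 (pdy (sq2 F₂) j')) haT hbl
      (Sum.inl γ),
    comp2_pdx_inl (fTdiff hprod hO) hKx hHx γ, pb2_pdx_inl hdHj γ]
  rw [mul_zero, add_zero]
  rfl

lemma pdxy_rr (hO : ((x, y) : _ × _) ∈ Om U₁ U₂) (j' γ' : Fin n) :
    pdx (pdy (sq2 F) (Sum.inr j')) (Sum.inr γ') x y =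
      comp2 (pderivT (pderivT f)) (sq2 F₁) (sq2 F₂) x y *
        pb2 (pdx (sq2 F₂) γ') x y * pb2 (pdy (sq2 F₂) j') x y +
      comp2 (pderivT f) (sq2 F₁) (sq2 F₂) x y *
        pb2 (pdx (pdy (sq2 F₂) j') γ') x y := by
  have hOo : IsOpen (Om (U₁ := U₁) U₂) := Om_open hprod.finsler₁.isOpen hprod.finsler₂.isOpen
  have hKx := sliceX_diffAt (O1_open hprod) (hK_smooth hprod) (Kmem hprod hO)
  have hHx := sliceX_diffAt (O2_open hprod) (hH_smooth hprod) (Hmem hprod hO)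
  have hdHj := sliceX_diffAt (O2_open hprod)
    (contDiffOn_pdy (O2_open hprod) (hH_smooth hprod) j') (Hmem hprod hO)
  have haT : DifferentiableAt ℝ (fun x' => comp2 (pderivT f) (sq2 F₁) (sq2 F₂) x' y) x :=
    (comp2_sliceX_hasFDerivAt (fTdiff hprod hO) hKx hHx).differentiableAt
  have hbl : DifferentiableAt ℝ (fun x' => pb2 (m := m) (pdy (sq2 F₂) j') x' y) x :=
    (pb2_sliceX_hasFDerivAt hdHj).differentiableAt
  rw [pdx_congr hOo (pdyG_inr hprod j') hO (Sum.inr γ'),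
    pdx_mul (a := comp2 (pderivT f) (sq2 F₁) (sq2 F₂)) (b := pb2 (pdy (sq2 F₂) j')) haT hbl
      (Sum.inr γ'),
    comp2_pdx_inr (fTdiff hprod hO) hKx hHx γ', pb2_pdx_inr hdHj γ']
  rfl

end SecondDerivs

section SmallSpray

variable {κ : Type*} [Fintype κ] [DecidableEq κ] {U : Set (E κ)} {Φ : E κ → E κ → ℝ}

lemma sq2_homog (hfin : IsFinslerMetric U Φ) :
    ∀ x ∈ U, ∀ (y : E κ) (c : ℝ), sq2 Φ x (c • y) = c ^ 2 * sq2 Φ x y := by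
  intro x hx y c
  show Φ x (c • y) ^ 2 = c ^ 2 * Φ x y ^ 2
  rw [hfin.homog x hx y c, mul_pow, sq_abs]

lemma sq2_smooth (hfin : IsFinslerMetric U Φ) :
    ContDiffOn ℝ (⊤ : ℕ∞) (Function.uncurry (sq2 Φ)) (U ×ˢ {z : E κ | z ≠ 0}) := hfin.smooth

lemma fund_isUnit_det (hfin : IsFinslerMetric U Φ) {x y : E κ} (hx : x ∈ U) (hy : y ≠ 0) :
    IsUnit (fundTensor Φ x y).det :=
  isUnit_iff_ne_zero.2 (ne_of_gt (hfin.posDef x hx y hy).det_pos)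

lemma spray_vec {x y : E κ} :
    (fun i => 2 * spray Φ i x y) = (fundTensor Φ x y)⁻¹ *ᵥ
      (fun β => (∑ γ, pdx (pdy (sq2 Φ) β) γ x y * y γ) - pdx (sq2 Φ) β x y) := by
  funext i
  show 2 * ((1 / 2) * ∑ β, (fundTensor Φ x y)⁻¹ i β * _) = _
  rw [Matrix.mulVec, dotProduct]
  ring_nf
  refine Finset.sum_congr rfl fun β _ => ?_
  rw [← mul_sub]
  simp only [mul_sub]; rfl

/-- S1: the linear system satisfied by the spray -/
lemma sprayS1 (hfin : IsFinslerMetric U Φ) {x y : E κ} (hx : x ∈ U) (hy : y ≠ 0) (j : κ) :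
    ∑ i, fundTensor Φ x y j i * (2 * spray Φ i x y) =
      (∑ γ, pdx (pdy (sq2 Φ) j) γ x y * y γ) - pdx (sq2 Φ) j x y := by
  have h1 : ∑ i, fundTensor Φ x y j i * (2 * spray Φ i x y) =
      (fundTensor Φ x y *ᵥ (fun i => 2 * spray Φ i x y)) j := by
    rw [Matrix.mulVec, dotProduct]
  rw [h1, spray_vec (Φ := Φ), Matrix.mulVec_mulVec,
    Matrix.mul_nonsing_inv _ (fund_isUnit_det hfin hx hy), Matrix.one_mulVec]

/-- S2: contraction with the gradient of K -/
lemma sprayS2 (hfin : IsFinslerMetric U Φ) {x y : E κ} (hx : x ∈ U) (hy : y ≠ 0) :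
    ∑ i, pdy (sq2 Φ) i x y * (2 * spray Φ i x y) =
      ∑ γ, pdx (sq2 Φ) γ x y * y γ := by
  have hsym : ∀ i l, fundTensor Φ x y i l = fundTensor Φ x y l i := by
    intro i l
    have h := (hfin.posDef x hx y hy).1
    have := congrFun (congrFun h i) l
    simpa [Matrix.conjTranspose_apply] using this.symm
  have hE1 : ∀ i, pdy (sq2 Φ) i x y = ∑ l, fundTensor Φ x y i l * y l := by
    intro i
    have := euler_y hfin.isOpen (sq2_smooth hfin) (sq2_homog hfin) hx hy i
    rw [← this]
    rfl
  calc ∑ i, pdy (sq2 Φ) i x y * (2 * spray Φ i x y)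
      = ∑ i, ∑ l, (fundTensor Φ x y i l * y l) * (2 * spray Φ i x y) := by
        refine Finset.sum_congr rfl fun i _ => ?_
        rw [hE1 i, Finset.sum_mul]
    _ = ∑ l, y l * ∑ i, fundTensor Φ x y l i * (2 * spray Φ i x y) := by
        rw [Finset.sum_comm]
        refine Finset.sum_congr rfl fun l _ => ?_
        rw [Finset.mul_sum]
        refine Finset.sum_congr rfl fun i _ => ?_
        rw [hsym i l]; ring
    _ = ∑ l, y l * ((∑ γ, pdx (pdy (sq2 Φ) l) γ x y * y γ) - pdx (sq2 Φ) l x y) := by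
        refine Finset.sum_congr rfl fun l _ => ?_
        rw [sprayS1 hfin hx hy l]
    _ = ∑ γ, pdx (sq2 Φ) γ x y * y γ := by
        have hE2 : ∀ γ, ∑ l, pdx (pdy (sq2 Φ) l) γ x y * y l = 2 * pdx (sq2 Φ) γ x y :=
          fun γ => euler_x hfin.isOpen (sq2_smooth hfin) (sq2_homog hfin) hx hy γ
        have expand : ∑ l, y l * ((∑ γ, pdx (pdy (sq2 Φ) l) γ x y * y γ) - pdx (sq2 Φ) l x y)
            = (∑ l, ∑ γ, y l * (pdx (pdy (sq2 Φ) l) γ x y * y γ)) -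
              ∑ l, y l * pdx (sq2 Φ) l x y := by
          rw [← Finset.sum_sub_distrib]
          refine Finset.sum_congr rfl fun l _ => ?_
          rw [mul_sub, Finset.mul_sum]
        rw [expand, Finset.sum_comm]
        have swap : ∑ γ, ∑ l, y l * (pdx (pdy (sq2 Φ) l) γ x y * y γ)
            = ∑ γ, (2 * pdx (sq2 Φ) γ x y) * y γ := by
          refine Finset.sum_congr rfl fun γ _ => ?_
          rw [← hE2 γ, Finset.sum_mul]
          refine Finset.sum_congr rfl fun l _ => by ring
        rw [swap]
        have : ∑ l, y l * pdx (sq2 Φ) l x y = ∑ γ, pdx (sq2 Φ) γ x y * y γ := by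
          exact Finset.sum_congr rfl fun l _ => by ring
        rw [this, ← Finset.sum_sub_distrib]
        refine Finset.sum_congr rfl fun γ _ => by ring

end SmallSpray

section SpraySplit

variable {m n : ℕ} {U₁ : Set (E (Fin m))} {U₂ : Set (E (Fin n))}
  {F₁ : E (Fin m) → E (Fin m) → ℝ} {F₂ : E (Fin n) → E (Fin n) → ℝ}
  {f : ℝ → ℝ → ℝ} {F : E (Fin m ⊕ Fin n) → E (Fin m ⊕ Fin n) → ℝ}
  (hprod : IsMinkowskianProduct U₁ U₂ F₁ F₂ f F)
  {x y : E (Fin m ⊕ Fin n)}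

include hprod

lemma spray_split (hO : ((x, y) : _ × _) ∈ Om U₁ U₂) :
    ∀ α, spray F α x y = Sum.elim (fun i => spray F₁ i (x ∘ Sum.inl) (y ∘ Sum.inl))
      (fun i' => spray F₂ i' (x ∘ Sum.inr) (y ∘ Sum.inr)) α := by
  obtain ⟨hx1, hx2, hy1, hy2⟩ := hO
  have hO : ((x, y) : _ × _) ∈ Om U₁ U₂ := ⟨hx1, hx2, hy1, hy2⟩
  set x1 := x ∘ Sum.inl with hx1def
  set y1 := y ∘ Sum.inl with hy1def
  set x2 := x ∘ Sum.inr with hx2def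
  set y2 := y ∘ Sum.inr with hy2def
  set A := fundTensor F x y with hA
  set w : E (Fin m ⊕ Fin n) := Sum.elim (fun i => 2 * spray F₁ i x1 y1)
    (fun i' => 2 * spray F₂ i' x2 y2) with hw
  set v : E (Fin m ⊕ Fin n) := fun β =>
    (∑ γ, pdx (pdy (sq2 F) β) γ x y * y γ) - pdx (sq2 F) β x y with hv
  -- scalars
  set fS := comp2 (pderivS f) (sq2 F₁) (sq2 F₂) x y with hfS
  set fT := comp2 (pderivT f) (sq2 F₁) (sq2 F₂) x y with hfT
  set fSS := comp2 (pderivS (pderivS f)) (sq2 F₁) (sq2 F₂) x y with hfSS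
  set fST := comp2 (pderivT (pderivS f)) (sq2 F₁) (sq2 F₂) x y with hfST
  set fTS := comp2 (pderivS (pderivT f)) (sq2 F₁) (sq2 F₂) x y with hfTS
  set fTT := comp2 (pderivT (pderivT f)) (sq2 F₁) (sq2 F₂) x y with hfTT
  have hschwarz : fST = fTS :=
    schwarz Iopen (f_unc_smooth hprod) (st_mem hprod hO)
  -- S-facts for F₁ and F₂
  have hS1K : ∀ j, ∑ i, fundTensor F₁ x1 y1 j i * (2 * spray F₁ i x1 y1) =
      (∑ γ, pdx (pdy (sq2 F₁) j) γ x1 y1 * y1 γ) - pdx (sq2 F₁) j x1 y1 :=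
    fun j => sprayS1 hprod.finsler₁ hx1 hy1 j
  have hS2K : ∑ i, pdy (sq2 F₁) i x1 y1 * (2 * spray F₁ i x1 y1) =
      ∑ γ, pdx (sq2 F₁) γ x1 y1 * y1 γ := sprayS2 hprod.finsler₁ hx1 hy1
  have hS1H : ∀ j', ∑ i', fundTensor F₂ x2 y2 j' i' * (2 * spray F₂ i' x2 y2) =
      (∑ γ', pdx (pdy (sq2 F₂) j') γ' x2 y2 * y2 γ') - pdx (sq2 F₂) j' x2 y2 :=
    fun j' => sprayS1 hprod.finsler₂ hx2 hy2 j'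
  have hS2H : ∑ i', pdy (sq2 F₂) i' x2 y2 * (2 * spray F₂ i' x2 y2) =
      ∑ γ', pdx (sq2 F₂) γ' x2 y2 * y2 γ' := sprayS2 hprod.finsler₂ hx2 hy2
  -- the main linear-system identity
  have hAv : A *ᵥ w = v := by
    funext β
    have hmv : (A *ᵥ w) β = ∑ i, A β (Sum.inl i) * w (Sum.inl i) +
        ∑ i', A β (Sum.inr i') * w (Sum.inr i') := by
      rw [Matrix.mulVec, dotProduct, Fintype.sum_sum_type]
    have hvβ : v β = (∑ γ, pdx (pdy (sq2 F) β) (Sum.inl γ) x y * y1 γ +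
        ∑ γ', pdx (pdy (sq2 F) β) (Sum.inr γ') x y * y2 γ') - pdx (sq2 F) β x y := by
      show (∑ γ : Fin m ⊕ Fin n, pdx (pdy (sq2 F) β) γ x y * y γ) -
        pdx (sq2 F) β x y = _
      rw [Fintype.sum_sum_type]
      rfl
    cases β with
    | inl j =>
      rw [hmv, hvβ]
      have e1 : ∑ i, A (Sum.inl j) (Sum.inl i) * w (Sum.inl i) =
          fSS * pb1 (pdy (sq2 F₁) j) x y * (∑ i, pdy (sq2 F₁) i x1 y1 * (2 * spray F₁ i x1 y1)) +
          fS * (∑ i, fundTensor F₁ x1 y1 j i * (2 * spray F₁ i x1 y1)) := by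
        rw [Finset.mul_sum, Finset.mul_sum, ← Finset.sum_add_distrib]
        refine Finset.sum_congr rfl fun i _ => ?_
        rw [hA, fund_ll hprod hO j i, hw]
        show (fSS * pb1 (pdy (sq2 F₁) j) x y * pb1 (pdy (sq2 F₁) i) x y +
          fS * fundTensor F₁ x1 y1 j i) * (2 * spray F₁ i x1 y1) = _
        have hpb : pb1 (n := n) (pdy (sq2 F₁) i) x y = pdy (sq2 F₁) i x1 y1 := rfl
        rw [hpb]; ring
      have e2 : ∑ i', A (Sum.inl j) (Sum.inr i') * w (Sum.inr i') =
          fTS * pb1 (pdy (sq2 F₁) j) x y *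
            (∑ i', pdy (sq2 F₂) i' x2 y2 * (2 * spray F₂ i' x2 y2)) := by
        rw [Finset.mul_sum]
        refine Finset.sum_congr rfl fun i' _ => ?_
        rw [hA, fund_lr hprod hO j i', hw]
        show fTS * pb1 (pdy (sq2 F₁) j) x y * pb2 (pdy (sq2 F₂) i') x y *
          (2 * spray F₂ i' x2 y2) = _
        have hpb : pb2 (m := m) (pdy (sq2 F₂) i') x y = pdy (sq2 F₂) i' x2 y2 := rfl
        rw [hpb]; ring
      have e3 : ∑ γ, pdx (pdy (sq2 F) (Sum.inl j)) (Sum.inl γ) x y * y1 γ =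
          fSS * pb1 (pdy (sq2 F₁) j) x y * (∑ γ, pdx (sq2 F₁) γ x1 y1 * y1 γ) +
          fS * (∑ γ, pdx (pdy (sq2 F₁) j) γ x1 y1 * y1 γ) := by
        rw [Finset.mul_sum, Finset.mul_sum, ← Finset.sum_add_distrib]
        refine Finset.sum_congr rfl fun γ _ => ?_
        rw [pdxy_ll hprod hO j γ]
        show (fSS * pb1 (pdx (sq2 F₁) γ) x y * pb1 (pdy (sq2 F₁) j) x y +
          fS * pb1 (pdx (pdy (sq2 F₁) j) γ) x y) * y1 γ = _
        have hpb1 : pb1 (n := n) (pdx (sq2 F₁) γ) x y = pdx (sq2 F₁) γ x1 y1 := rfl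
        have hpb2 : pb1 (n := n) (pdx (pdy (sq2 F₁) j) γ) x y =
          pdx (pdy (sq2 F₁) j) γ x1 y1 := rfl
        rw [hpb1, hpb2]; ring
      have e4 : ∑ γ', pdx (pdy (sq2 F) (Sum.inl j)) (Sum.inr γ') x y * y2 γ' =
          fST * pb1 (pdy (sq2 F₁) j) x y * (∑ γ', pdx (sq2 F₂) γ' x2 y2 * y2 γ') := by
        rw [Finset.mul_sum]
        refine Finset.sum_congr rfl fun γ' _ => ?_
        rw [pdxy_lr hprod hO j γ']
        show fST * pb2 (pdx (sq2 F₂) γ') x y * pb1 (pdy (sq2 F₁) j) x y * y2 γ' = _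
        have hpb : pb2 (m := m) (pdx (sq2 F₂) γ') x y = pdx (sq2 F₂) γ' x2 y2 := rfl
        rw [hpb]; ring
      have e5 : pdx (sq2 F) (Sum.inl j) x y = fS * pdx (sq2 F₁) j x1 y1 := by
        have := pdxG_inl hprod j x y hO
        rw [this]
        rfl
      rw [e1, e2, e3, e4, e5, hS2K, hS1K j, hS2H]
      rw [hschwarz]
      ring
    | inr j' =>
      rw [hmv, hvβ]
      have e1 : ∑ i, A (Sum.inr j') (Sum.inl i) * w (Sum.inl i) =
          fST * pb2 (pdy (sq2 F₂) j') x y *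
            (∑ i, pdy (sq2 F₁) i x1 y1 * (2 * spray F₁ i x1 y1)) := by
        rw [Finset.mul_sum]
        refine Finset.sum_congr rfl fun i _ => ?_
        rw [hA, fund_rl hprod hO j' i, hw]
        show fST * pb2 (pdy (sq2 F₂) j') x y * pb1 (pdy (sq2 F₁) i) x y *
          (2 * spray F₁ i x1 y1) = _
        have hpb : pb1 (n := n) (pdy (sq2 F₁) i) x y = pdy (sq2 F₁) i x1 y1 := rfl
        rw [hpb]; ring
      have e2 : ∑ i', A (Sum.inr j') (Sum.inr i') * w (Sum.inr i') =
          fTT * pb2 (pdy (sq2 F₂) j') x y *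
            (∑ i', pdy (sq2 F₂) i' x2 y2 * (2 * spray F₂ i' x2 y2)) +
          fT * (∑ i', fundTensor F₂ x2 y2 j' i' * (2 * spray F₂ i' x2 y2)) := by
        rw [Finset.mul_sum, Finset.mul_sum, ← Finset.sum_add_distrib]
        refine Finset.sum_congr rfl fun i' _ => ?_
        rw [hA, fund_rr hprod hO j' i', hw]
        show (fTT * pb2 (pdy (sq2 F₂) j') x y * pb2 (pdy (sq2 F₂) i') x y +
          fT * fundTensor F₂ x2 y2 j' i') * (2 * spray F₂ i' x2 y2) = _
        have hpb : pb2 (m := m) (pdy (sq2 F₂) i') x y = pdy (sq2 F₂) i' x2 y2 := rfl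
        rw [hpb]; ring
      have e3 : ∑ γ, pdx (pdy (sq2 F) (Sum.inr j')) (Sum.inl γ) x y * y1 γ =
          fTS * pb2 (pdy (sq2 F₂) j') x y * (∑ γ, pdx (sq2 F₁) γ x1 y1 * y1 γ) := by
        rw [Finset.mul_sum]
        refine Finset.sum_congr rfl fun γ _ => ?_
        rw [pdxy_rl hprod hO j' γ]
        show fTS * pb1 (pdx (sq2 F₁) γ) x y * pb2 (pdy (sq2 F₂) j') x y * y1 γ = _
        have hpb : pb1 (n := n) (pdx (sq2 F₁) γ) x y = pdx (sq2 F₁) γ x1 y1 := rfl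
        rw [hpb]; ring
      have e4 : ∑ γ', pdx (pdy (sq2 F) (Sum.inr j')) (Sum.inr γ') x y * y2 γ' =
          fTT * pb2 (pdy (sq2 F₂) j') x y * (∑ γ', pdx (sq2 F₂) γ' x2 y2 * y2 γ') +
          fT * (∑ γ', pdx (pdy (sq2 F₂) j') γ' x2 y2 * y2 γ') := by
        rw [Finset.mul_sum, Finset.mul_sum, ← Finset.sum_add_distrib]
        refine Finset.sum_congr rfl fun γ' _ => ?_
        rw [pdxy_rr hprod hO j' γ']
        show (fTT * pb2 (pdx (sq2 F₂) γ') x y * pb2 (pdy (sq2 F₂) j') x y +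
          fT * pb2 (pdx (pdy (sq2 F₂) j') γ') x y) * y2 γ' = _
        have hpb1 : pb2 (m := m) (pdx (sq2 F₂) γ') x y = pdx (sq2 F₂) γ' x2 y2 := rfl
        have hpb2 : pb2 (m := m) (pdx (pdy (sq2 F₂) j') γ') x y =
          pdx (pdy (sq2 F₂) j') γ' x2 y2 := rfl
        rw [hpb1, hpb2]; ring
      have e5 : pdx (sq2 F) (Sum.inr j') x y = fT * pdx (sq2 F₂) j' x2 y2 := by
        have := pdxG_inr hprod j' x y hO
        rw [this]
        rfl
      rw [e1, e2, e3, e4, e5, hS2K, hS1H j', hS2H]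
      rw [hschwarz]
      ring
  -- invertibility and conclusion
  have hyne : y ≠ 0 := by
    intro hc
    apply hy1
    funext i
    rw [hy1def, hc]
    rfl
  have hdet : IsUnit A.det :=
    isUnit_iff_ne_zero.2 (ne_of_gt
      (hprod.finsler.posDef x ⟨hx1, hx2⟩ y hyne).det_pos)
  have hw2 : ∀ α, 2 * spray F α x y = w α := by
    intro α
    have h1 : (fun α => 2 * spray F α x y) = A⁻¹ *ᵥ v := spray_vec (Φ := F)
    have h2 : A⁻¹ *ᵥ v = w := by
      rw [← hAv, Matrix.mulVec_mulVec, Matrix.nonsing_inv_mul _ hdet, Matrix.one_mulVec]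
    rw [congrFun h1 α, h2]
  intro α
  have := hw2 α
  cases α with
  | inl i =>
    have h3 : w (Sum.inl i) = 2 * spray F₁ i x1 y1 := rfl
    rw [h3] at this
    have := mul_left_cancel₀ (two_ne_zero) this
    simpa using this
  | inr i' =>
    have h3 : w (Sum.inr i') = 2 * spray F₂ i' x2 y2 := rfl
    rw [h3] at this
    have := mul_left_cancel₀ (two_ne_zero) this
    simpa using this

end SpraySplit

section MatrixSmooth

variable {P : Type*} [NormedAddCommGroup P] [NormedSpace ℝ P] {s : Set P}
variable {κ : Type*} [Fintype κ] [DecidableEq κ]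

lemma contDiffOn_finset_prod {σ : Type*} {t : Finset σ} {G : σ → P → ℝ}
    (h : ∀ i ∈ t, ContDiffOn ℝ (⊤ : ℕ∞) (G i) s) :
    ContDiffOn ℝ (⊤ : ℕ∞) (fun p => ∏ i ∈ t, G i p) s := by
  classical
  induction t using Finset.induction with
  | empty => simpa using contDiffOn_const
  | insert a t' hni ih =>
    simp only [Finset.prod_insert hni]
    exact (h a (Finset.mem_insert_self a t')).mul
      (ih fun i hi => h i (Finset.mem_insert_of_mem hi))

lemma contDiffOn_det {M : P → Matrix κ κ ℝ}
    (hM : ∀ i j, ContDiffOn ℝ (⊤ : ℕ∞) (fun p => M p i j) s) :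
    ContDiffOn ℝ (⊤ : ℕ∞) (fun p => (M p).det) s := by
  have : (fun p => (M p).det) =
      fun p => ∑ σ : Equiv.Perm κ, ((Equiv.Perm.sign σ : ℤ) : ℝ) * ∏ i, M p (σ i) i := by
    funext p
    rw [Matrix.det_apply]
    refine Finset.sum_congr rfl fun σ _ => ?_
    rw [Units.smul_def, zsmul_eq_mul]
  rw [this]
  exact ContDiffOn.sum fun σ _ =>
    (contDiffOn_const.mul (contDiffOn_finset_prod fun i _ => hM (σ i) i))

lemma contDiffOn_adjugate {M : P → Matrix κ κ ℝ}
    (hM : ∀ i j, ContDiffOn ℝ (⊤ : ℕ∞) (fun p => M p i j) s) (i j : κ) :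
    ContDiffOn ℝ (⊤ : ℕ∞) (fun p => (M p).adjugate i j) s := by
  have : (fun p => (M p).adjugate i j) =
      fun p => ((M p).updateRow j (Pi.single i 1)).det := by
    funext p
    rw [Matrix.adjugate_apply]
  rw [this]
  refine contDiffOn_det fun k l => ?_
  by_cases hk : k = j
  · subst hk
    simp only [Matrix.updateRow_self]
    exact contDiffOn_const
  · simp only [Matrix.updateRow_apply, if_neg hk]
    exact hM k l

lemma contDiffOn_inv_entry {M : P → Matrix κ κ ℝ}
    (hM : ∀ i j, ContDiffOn ℝ (⊤ : ℕ∞) (fun p => M p i j) s)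
    (hdet : ∀ p ∈ s, (M p).det ≠ 0) (i j : κ) :
    ContDiffOn ℝ (⊤ : ℕ∞) (fun p => (M p)⁻¹ i j) s := by
  have heq : (fun p => (M p)⁻¹ i j) =
      fun p => ((M p).det)⁻¹ * (M p).adjugate i j := by
    funext p
    rw [Matrix.inv_def, Ring.inverse_eq_inv, Matrix.smul_apply, smul_eq_mul]
  rw [heq]
  exact ((contDiffOn_det hM).inv hdet).mul (contDiffOn_adjugate hM i j)

end MatrixSmooth

section SpraySmooth

variable {κ : Type*} [Fintype κ] [DecidableEq κ] {U : Set (E κ)} {Φ : E κ → E κ → ℝ}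

lemma contDiffOn_coord (γ : κ) :
    ContDiffOn ℝ (⊤ : ℕ∞) (fun p : E κ × E κ => p.2 γ) (U ×ˢ {z : E κ | z ≠ 0}) := by
  have : ContDiff ℝ (⊤ : ℕ∞) (fun p : E κ × E κ => p.2 γ) :=
    ((ContinuousLinearMap.proj γ).comp (ContinuousLinearMap.snd ℝ (E κ) (E κ))).contDiff
  exact this.contDiffOn

lemma contDiffOn_spray (hfin : IsFinslerMetric U Φ) (i : κ) :
    ContDiffOn ℝ (⊤ : ℕ∞) (Function.uncurry (spray Φ i)) (U ×ˢ {z : E κ | z ≠ 0}) := by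
  have hopen : IsOpen (U ×ˢ {z : E κ | z ≠ 0}) := hfin.isOpen.prod isOpen_ne
  have hsq := sq2_smooth hfin
  have hfund : ∀ α β : κ, ContDiffOn ℝ (⊤ : ℕ∞)
      (fun p : E κ × E κ => fundTensor Φ p.1 p.2 α β) (U ×ˢ {z : E κ | z ≠ 0}) := by
    intro α β
    exact contDiffOn_pdy hopen (contDiffOn_pdy hopen hsq β) α
  have hdet : ∀ p ∈ U ×ˢ {z : E κ | z ≠ 0}, (fundTensor Φ p.1 p.2).det ≠ 0 := by
    rintro ⟨px, py⟩ hp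
    exact ne_of_gt (hfin.posDef px hp.1 py hp.2).det_pos
  have hinv : ∀ α β : κ, ContDiffOn ℝ (⊤ : ℕ∞)
      (fun p : E κ × E κ => (fundTensor Φ p.1 p.2)⁻¹ α β) (U ×ˢ {z : E κ | z ≠ 0}) :=
    fun α β => contDiffOn_inv_entry hfund hdet α β
  have hT : ∀ β : κ, ContDiffOn ℝ (⊤ : ℕ∞)
      (fun p : E κ × E κ => (∑ γ, pdx (pdy (sq2 Φ) β) γ p.1 p.2 * p.2 γ) -
        pdx (sq2 Φ) β p.1 p.2) (U ×ˢ {z : E κ | z ≠ 0}) := by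
    intro β
    refine ContDiffOn.sub ?_ (contDiffOn_pdx hopen hsq β)
    refine ContDiffOn.sum fun γ _ => ?_
    exact (contDiffOn_pdx hopen (contDiffOn_pdy hopen hsq β) γ).mul (contDiffOn_coord γ)
  have : ContDiffOn ℝ (⊤ : ℕ∞) (fun p : E κ × E κ =>
      (1 / 2 : ℝ) * ∑ β, (fundTensor Φ p.1 p.2)⁻¹ i β *
        ((∑ γ, pdx (pdy (sq2 Φ) β) γ p.1 p.2 * p.2 γ) - pdx (sq2 Φ) β p.1 p.2))
      (U ×ˢ {z : E κ | z ≠ 0}) := by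
    exact contDiffOn_const.mul (ContDiffOn.sum fun β _ => (hinv i β).mul (hT β))
  exact this.congr fun p hp => rfl

end SpraySmooth

section Transfer

variable {m n : ℕ} {U₁ : Set (E (Fin m))} {U₂ : Set (E (Fin n))}

lemma step_zero (hU₁ : IsOpen U₁) (hU₂ : IsOpen U₂)
    {g : E (Fin m ⊕ Fin n) → E (Fin m ⊕ Fin n) → ℝ}
    (hg : ∀ x' y', ((x', y') : _ × _) ∈ Om U₁ U₂ → g x' y' = 0)
    (β : Fin m ⊕ Fin n) :
    ∀ x' y', ((x', y') : _ × _) ∈ Om U₁ U₂ → pdy g β x' y' = 0 := by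
  intro x y hO
  rw [pdy_congr (g₂ := fun _ _ => (0 : ℝ)) (Om_open hU₁ hU₂) hg hO β]
  show fderiv ℝ (fun _ => (0 : ℝ)) y (Pi.single β 1) = 0
  simp

lemma step1_inl (hU₁ : IsOpen U₁) (hU₂ : IsOpen U₂)
    {φ : E (Fin m) → E (Fin m) → ℝ} {g : E (Fin m ⊕ Fin n) → E (Fin m ⊕ Fin n) → ℝ}
    (hφ : ContDiffOn ℝ (⊤ : ℕ∞) (Function.uncurry φ) (U₁ ×ˢ {z : E (Fin m) | z ≠ 0}))
    (hg : ∀ x' y', ((x', y') : _ × _) ∈ Om U₁ U₂ → g x' y' = pb1 φ x' y') (j : Fin m) :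
    ∀ x' y', ((x', y') : _ × _) ∈ Om U₁ U₂ →
      pdy g (Sum.inl j) x' y' = pb1 (pdy φ j) x' y' := by
  intro x y hO
  rw [pdy_congr (Om_open hU₁ hU₂) hg hO (Sum.inl j)]
  exact pb1_pdy_inl (sliceY_diffAt (hU₁.prod isOpen_ne) hφ ⟨hO.1, hO.2.2.1⟩) j

lemma step1_inr (hU₁ : IsOpen U₁) (hU₂ : IsOpen U₂)
    {φ : E (Fin m) → E (Fin m) → ℝ} {g : E (Fin m ⊕ Fin n) → E (Fin m ⊕ Fin n) → ℝ}
    (hφ : ContDiffOn ℝ (⊤ : ℕ∞) (Function.uncurry φ) (U₁ ×ˢ {z : E (Fin m) | z ≠ 0}))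
    (hg : ∀ x' y', ((x', y') : _ × _) ∈ Om U₁ U₂ → g x' y' = pb1 φ x' y') (j' : Fin n) :
    ∀ x' y', ((x', y') : _ × _) ∈ Om U₁ U₂ → pdy g (Sum.inr j') x' y' = 0 := by
  intro x y hO
  rw [pdy_congr (Om_open hU₁ hU₂) hg hO (Sum.inr j')]
  exact pb1_pdy_inr (sliceY_diffAt (hU₁.prod isOpen_ne) hφ ⟨hO.1, hO.2.2.1⟩) j'

lemma step2_inr (hU₁ : IsOpen U₁) (hU₂ : IsOpen U₂)
    {ψ : E (Fin n) → E (Fin n) → ℝ} {g : E (Fin m ⊕ Fin n) → E (Fin m ⊕ Fin n) → ℝ}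
    (hψ : ContDiffOn ℝ (⊤ : ℕ∞) (Function.uncurry ψ) (U₂ ×ˢ {z : E (Fin n) | z ≠ 0}))
    (hg : ∀ x' y', ((x', y') : _ × _) ∈ Om U₁ U₂ → g x' y' = pb2 ψ x' y') (j' : Fin n) :
    ∀ x' y', ((x', y') : _ × _) ∈ Om U₁ U₂ →
      pdy g (Sum.inr j') x' y' = pb2 (pdy ψ j') x' y' := by
  intro x y hO
  rw [pdy_congr (Om_open hU₁ hU₂) hg hO (Sum.inr j')]
  exact pb2_pdy_inr (sliceY_diffAt (hU₂.prod isOpen_ne) hψ ⟨hO.2.1, hO.2.2.2⟩) j'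

lemma step2_inl (hU₁ : IsOpen U₁) (hU₂ : IsOpen U₂)
    {ψ : E (Fin n) → E (Fin n) → ℝ} {g : E (Fin m ⊕ Fin n) → E (Fin m ⊕ Fin n) → ℝ}
    (hψ : ContDiffOn ℝ (⊤ : ℕ∞) (Function.uncurry ψ) (U₂ ×ˢ {z : E (Fin n) | z ≠ 0}))
    (hg : ∀ x' y', ((x', y') : _ × _) ∈ Om U₁ U₂ → g x' y' = pb2 ψ x' y') (j : Fin m) :
    ∀ x' y', ((x', y') : _ × _) ∈ Om U₁ U₂ → pdy g (Sum.inl j) x' y' = 0 := by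
  intro x y hO
  rw [pdy_congr (Om_open hU₁ hU₂) hg hO (Sum.inl j)]
  exact pb2_pdy_inl (sliceY_diffAt (hU₂.prod isOpen_ne) hψ ⟨hO.2.1, hO.2.2.2⟩) j

/-- invariant for the first block -/
def Good1 (U₁ : Set (E (Fin m))) (U₂ : Set (E (Fin n)))
    (g : E (Fin m ⊕ Fin n) → E (Fin m ⊕ Fin n) → ℝ) : Prop :=
  (∃ φ, ContDiffOn ℝ (⊤ : ℕ∞) (Function.uncurry φ) (U₁ ×ˢ {z : E (Fin m) | z ≠ 0}) ∧
    ∀ x' y', ((x', y') : _ × _) ∈ Om U₁ U₂ → g x' y' = pb1 φ x' y') ∨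
  (∀ x' y', ((x', y') : _ × _) ∈ Om U₁ U₂ → g x' y' = 0)

def Good2 (U₁ : Set (E (Fin m))) (U₂ : Set (E (Fin n)))
    (g : E (Fin m ⊕ Fin n) → E (Fin m ⊕ Fin n) → ℝ) : Prop :=
  (∃ ψ, ContDiffOn ℝ (⊤ : ℕ∞) (Function.uncurry ψ) (U₂ ×ˢ {z : E (Fin n) | z ≠ 0}) ∧
    ∀ x' y', ((x', y') : _ × _) ∈ Om U₁ U₂ → g x' y' = pb2 ψ x' y') ∨
  (∀ x' y', ((x', y') : _ × _) ∈ Om U₁ U₂ → g x' y' = 0)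

lemma good1_pdy (hU₁ : IsOpen U₁) (hU₂ : IsOpen U₂)
    {g : E (Fin m ⊕ Fin n) → E (Fin m ⊕ Fin n) → ℝ} (hg : Good1 U₁ U₂ g)
    (β : Fin m ⊕ Fin n) : Good1 U₁ U₂ (pdy g β) := by
  rcases hg with ⟨φ, hφ, heq⟩ | hz
  · cases β with
    | inl j => exact Or.inl ⟨pdy φ j, contDiffOn_pdy (hU₁.prod isOpen_ne) hφ j,
        step1_inl hU₁ hU₂ hφ heq j⟩
    | inr j' => exact Or.inr (step1_inr hU₁ hU₂ hφ heq j')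
  · exact Or.inr (step_zero hU₁ hU₂ hz β)

lemma good2_pdy (hU₁ : IsOpen U₁) (hU₂ : IsOpen U₂)
    {g : E (Fin m ⊕ Fin n) → E (Fin m ⊕ Fin n) → ℝ} (hg : Good2 U₁ U₂ g)
    (β : Fin m ⊕ Fin n) : Good2 U₁ U₂ (pdy g β) := by
  rcases hg with ⟨ψ, hψ, heq⟩ | hz
  · cases β with
    | inr j' => exact Or.inl ⟨pdy ψ j', contDiffOn_pdy (hU₂.prod isOpen_ne) hψ j',
        step2_inr hU₁ hU₂ hψ heq j'⟩
    | inl j => exact Or.inr (step2_inl hU₁ hU₂ hψ heq j)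
  · exact Or.inr (step_zero hU₁ hU₂ hz β)

lemma good1_pdy_inr_zero (hU₁ : IsOpen U₁) (hU₂ : IsOpen U₂)
    {g : E (Fin m ⊕ Fin n) → E (Fin m ⊕ Fin n) → ℝ} (hg : Good1 U₁ U₂ g) (j' : Fin n) :
    ∀ x' y', ((x', y') : _ × _) ∈ Om U₁ U₂ → pdy g (Sum.inr j') x' y' = 0 := by
  rcases hg with ⟨φ, hφ, heq⟩ | hz
  · exact step1_inr hU₁ hU₂ hφ heq j'
  · exact step_zero hU₁ hU₂ hz (Sum.inr j')

lemma good2_pdy_inl_zero (hU₁ : IsOpen U₁) (hU₂ : IsOpen U₂)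
    {g : E (Fin m ⊕ Fin n) → E (Fin m ⊕ Fin n) → ℝ} (hg : Good2 U₁ U₂ g) (j : Fin m) :
    ∀ x' y', ((x', y') : _ × _) ∈ Om U₁ U₂ → pdy g (Sum.inl j) x' y' = 0 := by
  rcases hg with ⟨ψ, hψ, heq⟩ | hz
  · exact step2_inl hU₁ hU₂ hψ heq j
  · exact step_zero hU₁ hU₂ hz (Sum.inl j)

end Transfer

end MinkProof

open MinkProof

/-- The Berwald curvature of a Minkowskian product Finsler metric splits on the
pure blocks, and every component with mixed block indices vanishes. -/
theorem berwaldCurv_of_minkowskian_product {m n : ℕ}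
    (U₁ : Set (Fin m → ℝ)) (U₂ : Set (Fin n → ℝ))
    (F₁ : (Fin m → ℝ) → (Fin m → ℝ) → ℝ) (F₂ : (Fin n → ℝ) → (Fin n → ℝ) → ℝ)
    (f : ℝ → ℝ → ℝ) (F : (Fin m ⊕ Fin n → ℝ) → (Fin m ⊕ Fin n → ℝ) → ℝ)
    (hprod : IsMinkowskianProduct U₁ U₂ F₁ F₂ f F) :
    ∀ x : Fin m ⊕ Fin n → ℝ, (x ∘ Sum.inl) ∈ U₁ → (x ∘ Sum.inr) ∈ U₂ →
    ∀ y : Fin m ⊕ Fin n → ℝ, (y ∘ Sum.inl) ≠ 0 → (y ∘ Sum.inr) ≠ 0 →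
      (∀ i j l h : Fin m,
        berwaldCurv F (Sum.inl i) (Sum.inl j) (Sum.inl l) (Sum.inl h) x y =
          berwaldCurv F₁ i j l h (x ∘ Sum.inl) (y ∘ Sum.inl)) ∧
      (∀ i' j' l' h' : Fin n,
        berwaldCurv F (Sum.inr i') (Sum.inr j') (Sum.inr l') (Sum.inr h') x y =
          berwaldCurv F₂ i' j' l' h' (x ∘ Sum.inr) (y ∘ Sum.inr)) ∧
      (∀ (i : Fin m) (β γ η : Fin m ⊕ Fin n),
        ((∃ j' : Fin n, β = Sum.inr j') ∨ (∃ l' : Fin n, γ = Sum.inr l') ∨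
          (∃ h' : Fin n, η = Sum.inr h')) →
        berwaldCurv F (Sum.inl i) β γ η x y = 0) ∧
      (∀ (i' : Fin n) (β γ η : Fin m ⊕ Fin n),
        ((∃ j : Fin m, β = Sum.inl j) ∨ (∃ l : Fin m, γ = Sum.inl l) ∨
          (∃ h : Fin m, η = Sum.inl h)) →
        berwaldCurv F (Sum.inr i') β γ η x y = 0) := by
  intro x hx1 hx2 y hy1 hy2
  have hU₁ : IsOpen U₁ := hprod.finsler₁.isOpen
  have hU₂ : IsOpen U₂ := hprod.finsler₂.isOpen
  have hO : ((x, y) : _ × _) ∈ Om U₁ U₂ := ⟨hx1, hx2, hy1, hy2⟩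
  have hsm1 : ∀ i : Fin m, ContDiffOn ℝ (⊤ : ℕ∞) (Function.uncurry (spray F₁ i))
      (U₁ ×ˢ {z : Fin m → ℝ | z ≠ 0}) := fun i => contDiffOn_spray hprod.finsler₁ i
  have hsm2 : ∀ i' : Fin n, ContDiffOn ℝ (⊤ : ℕ∞) (Function.uncurry (spray F₂ i'))
      (U₂ ×ˢ {z : Fin n → ℝ | z ≠ 0}) := fun i' => contDiffOn_spray hprod.finsler₂ i'
  have hbase1 : ∀ i : Fin m, ∀ x' y', ((x', y') : _ × _) ∈ Om U₁ U₂ →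
      spray F (Sum.inl i) x' y' = pb1 (spray F₁ i) x' y' := by
    intro i x' y' hO'
    exact spray_split hprod hO' (Sum.inl i)
  have hbase2 : ∀ i' : Fin n, ∀ x' y', ((x', y') : _ × _) ∈ Om U₁ U₂ →
      spray F (Sum.inr i') x' y' = pb2 (spray F₂ i') x' y' := by
    intro i' x' y' hO'
    exact spray_split hprod hO' (Sum.inr i')
  refine ⟨?_, ?_, ?_, ?_⟩
  · intro i j l h
    have h1 := step1_inl hU₁ hU₂ (hsm1 i) (hbase1 i) h
    have h2 := step1_inl hU₁ hU₂
      (contDiffOn_pdy (hU₁.prod isOpen_ne) (hsm1 i) h) h1 l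
    have h3 := step1_inl hU₁ hU₂
      (contDiffOn_pdy (hU₁.prod isOpen_ne)
        (contDiffOn_pdy (hU₁.prod isOpen_ne) (hsm1 i) h) l) h2 j
    exact h3 x y hO
  · intro i' j' l' h'
    have h1 := step2_inr hU₁ hU₂ (hsm2 i') (hbase2 i') h'
    have h2 := step2_inr hU₁ hU₂
      (contDiffOn_pdy (hU₂.prod isOpen_ne) (hsm2 i') h') h1 l'
    have h3 := step2_inr hU₁ hU₂
      (contDiffOn_pdy (hU₂.prod isOpen_ne)
        (contDiffOn_pdy (hU₂.prod isOpen_ne) (hsm2 i') h') l') h2 j'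
    exact h3 x y hO
  · intro i β γ η hmix
    have hS : Good1 U₁ U₂ (spray F (Sum.inl i)) := Or.inl ⟨spray F₁ i, hsm1 i, hbase1 i⟩
    rcases hmix with ⟨j', rfl⟩ | ⟨l', rfl⟩ | ⟨h', rfl⟩
    · exact good1_pdy_inr_zero hU₁ hU₂ (good1_pdy hU₁ hU₂ (good1_pdy hU₁ hU₂ hS η) γ)
        j' x y hO
    · have hz := good1_pdy_inr_zero hU₁ hU₂ (good1_pdy hU₁ hU₂ hS η) l'
      exact step_zero hU₁ hU₂ hz β x y hO
    · have hz := good1_pdy_inr_zero hU₁ hU₂ hS h'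
      have hz2 := step_zero hU₁ hU₂ hz γ
      exact step_zero hU₁ hU₂ hz2 β x y hO
  · intro i' β γ η hmix
    have hS : Good2 U₁ U₂ (spray F (Sum.inr i')) := Or.inl ⟨spray F₂ i', hsm2 i', hbase2 i'⟩
    rcases hmix with ⟨j, rfl⟩ | ⟨l, rfl⟩ | ⟨h, rfl⟩
    · exact good2_pdy_inl_zero hU₁ hU₂ (good2_pdy hU₁ hU₂ (good2_pdy hU₁ hU₂ hS η) γ)
        j x y hO
    · have hz := good2_pdy_inl_zero hU₁ hU₂ (good2_pdy hU₁ hU₂ hS η) l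
      exact step_zero hU₁ hU₂ hz β x y hO
    · have hz := good2_pdy_inl_zero hU₁ hU₂ hS h
      have hz2 := step_zero hU₁ hU₂ hz γ
      exact step_zero hU₁ hU₂ hz2 β x y hO
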